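/- arXiv:2206.08216 — 8 statements merged into one kernel-verified Lean document; each statement's English description precedes it below -/
import Mathlib

section
/- Let λ > 0, ν > 0 and let f(x; λ, ν) = λ ν exp(−λx) (1 − exp(−λx))^(ν−1) be the GE density. For every t with 0 ≤ t < λ, the moment generating function satisfies ∫₀^∞ exp(t x) f(x; λ, ν) dx = Γ(ν + 1) Γ(1 − t/λ) / Γ(ν − t/λ + 1). -/
open Real Set MeasureTheory intervalIntegral

lemma real_beta {a b : ℝ} (ha : 0 < a) (hb : 0 < b) :
    ∫ x in (0:ℝ)..1, x ^ (a-1) * (1-x) ^ (b-1) =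
      Real.Gamma a * Real.Gamma b / Real.Gamma (a+b) := by
  have hab : (0:ℝ) < Real.Gamma (a + b) := Real.Gamma_pos_of_pos (by linarith)
  have h := Complex.Gamma_mul_Gamma_eq_betaIntegral (s := (a:ℂ)) (t := (b:ℂ))
    (by simpa using ha) (by simpa using hb)
  have hB : Complex.betaIntegral a b =
      ((∫ x in (0:ℝ)..1, x ^ (a-1) * (1-x) ^ (b-1) : ℝ) : ℂ) := by
    rw [Complex.betaIntegral, ← intervalIntegral.integral_ofReal]
    refine intervalIntegral.integral_congr fun x hx => ?_
    rw [uIcc_of_le zero_le_one] at hx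
    push_cast [Complex.ofReal_cpow hx.1 (a-1), Complex.ofReal_cpow (by linarith [hx.2] : (0:ℝ) ≤ 1 - x) (b-1)]
    ring
  rw [hB, ← Complex.ofReal_add, Complex.Gamma_ofReal, Complex.Gamma_ofReal,
    Complex.Gamma_ofReal, ← Complex.ofReal_mul, ← Complex.ofReal_mul] at h
  have := Complex.ofReal_injective h
  field_simp
  linarith [this]


/-- The generalized exponential (GE) density with rate `l > 0` and shape `v > 0`. -/
noncomputable def geDensity (l v x : ℝ) : ℝ :=
  l * v * Real.exp (-(l * x)) * (1 - Real.exp (-(l * x))) ^ (v - 1)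

/-- The moment generating function of the GE distribution:
for `0 ≤ t < λ`, `∫₀^∞ exp(t x) f(x; λ, ν) dx = Γ(ν+1) Γ(1 − t/λ) / Γ(ν − t/λ + 1)`. -/
theorem ge_mgf (l v t : ℝ) (hl : 0 < l) (hv : 0 < v) (ht0 : 0 ≤ t) (ht : t < l) :
    ∫ x in Ioi (0 : ℝ), Real.exp (t * x) * geDensity l v x =
      Real.Gamma (v + 1) * Real.Gamma (1 - t / l) / Real.Gamma (v - t / l + 1) := by
  set b : ℝ := 1 - t / l with hb_def
  have hb : 0 < b := by
    have : t / l < 1 := (div_lt_one hl).mpr ht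
    simp [hb_def]; linarith
  set φ : ℝ → ℝ := fun x => 1 - Real.exp (-(l * x)) with hφ
  set g : ℝ → ℝ := fun u => v * (u ^ (v - 1) * (1 - u) ^ (b - 1)) with hg
  have himg : φ '' Ioi (0:ℝ) = Ioo 0 1 := by
    ext u
    constructor
    · rintro ⟨x, hx, rfl⟩
      have hx0 : 0 < l * x := mul_pos hl hx
      have h1 : Real.exp (-(l * x)) < 1 := Real.exp_lt_one_iff.mpr (by linarith)
      have h2 : 0 < Real.exp (-(l * x)) := Real.exp_pos _
      exact ⟨by simp [hφ]; linarith, by simp [hφ]; linarith⟩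
    · rintro ⟨hu0, hu1⟩
      refine ⟨-Real.log (1 - u) / l, ?_, ?_⟩
      · have : Real.log (1 - u) < 0 := Real.log_neg (by linarith) (by linarith)
        exact mem_Ioi.mpr (div_pos (by linarith) hl)
      · have h1u : (0:ℝ) < 1 - u := by linarith
        simp only [hφ]
        rw [mul_div_cancel₀ _ hl.ne', neg_neg, Real.exp_log h1u]
        ring
  have hderiv : ∀ x ∈ Ioi (0:ℝ),
      HasDerivWithinAt φ (l * Real.exp (-(l * x))) (Ioi 0) x := by
    intro x _
    have h1 : HasDerivAt (fun x : ℝ => -(l * x)) (-l) x := by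
      simpa using ((hasDerivAt_id x).const_mul l).fun_neg
    have h2 := (h1.exp).const_sub 1
    simpa [hφ, mul_comm] using h2.hasDerivWithinAt
  have hinj : InjOn φ (Ioi 0) := by
    intro x _ y _ hxy
    have : Real.exp (-(l * x)) = Real.exp (-(l * y)) := by
      simpa [hφ, sub_right_injective.eq_iff] using hxy
    have := Real.exp_injective this
    have := neg_injective this
    exact mul_left_cancel₀ hl.ne' this
  have key : ∫ u in φ '' Ioi (0:ℝ), g u =
      ∫ x in Ioi (0:ℝ), |l * Real.exp (-(l * x))| • g (φ x) :=
    integral_image_eq_integral_abs_deriv_smul measurableSet_Ioi hderiv hinj g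
  rw [himg] at key
  have heq : ∀ x ∈ Ioi (0:ℝ),
      |l * Real.exp (-(l * x))| • g (φ x) = Real.exp (t * x) * geDensity l v x := by
    intro x _
    have hep : 0 < Real.exp (-(l * x)) := Real.exp_pos _
    have habs : |l * Real.exp (-(l * x))| = l * Real.exp (-(l * x)) :=
      abs_of_pos (mul_pos hl hep)
    have hrp : Real.exp (-(l * x)) ^ (b - 1) = Real.exp (t * x) := by
      rw [Real.rpow_def_of_pos hep, Real.log_exp]
      congr 1
      field_simp [hb_def]
      have hlt : l * (t / l) = t := by rw [mul_div_assoc', mul_div_right_comm, div_self hl.ne', one_mul]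
      linear_combination (-l * x) * hb_def + x * hlt
    simp only [smul_eq_mul, habs, hg, hφ, geDensity, sub_sub_cancel, hrp]
    ring
  rw [MeasureTheory.setIntegral_congr_fun measurableSet_Ioi heq] at key
  rw [← key]
  rw [← MeasureTheory.integral_Ioc_eq_integral_Ioo,
    ← intervalIntegral.integral_of_le zero_le_one]
  rw [intervalIntegral.integral_const_mul, real_beta hv hb,
    Real.Gamma_add_one hv.ne', show v + b = v - t / l + 1 by rw [hb_def]; ring]
  ring
end

section
/- Let λ > 0, ν > 0 and let f(x; λ, ν) be the GE density. Then the mean of the GE distribution satisfies ∫₀^∞ x f(x; λ, ν) dx = (ψ(ν + 1) − ψ(1)) / λ, where ψ is the digamma function. -/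
open Real Set

/-- The digamma function `ψ(x) = d/dx log Γ(x)`. -/
noncomputable def digamma : ℝ → ℝ := deriv fun x => Real.log (Real.Gamma x)

open MeasureTheory

lemma betaComplexEq {a b : ℝ} :
    Complex.betaIntegral a b =
      ((∫ x in (0:ℝ)..1, x ^ (a-1) * (1-x) ^ (b-1) : ℝ) : ℂ) := by
  rw [Complex.betaIntegral, ← intervalIntegral.integral_ofReal]
  refine intervalIntegral.integral_congr fun x hx => ?_
  rw [uIcc_of_le zero_le_one] at hx
  rw [Complex.ofReal_mul, Complex.ofReal_cpow hx.1,
    Complex.ofReal_cpow (by linarith [hx.2] : (0:ℝ) ≤ 1 - x)]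
  push_cast
  ring

lemma betaReal {a b : ℝ} (ha : 0 < a) (hb : 0 < b) :
    ∫ x in Ioo (0:ℝ) 1, x ^ (a-1) * (1-x) ^ (b-1) =
      Real.Gamma a * Real.Gamma b / Real.Gamma (a+b) := by
  have h := Complex.Gamma_mul_Gamma_eq_betaIntegral (s := a) (t := b)
    (by simpa using ha) (by simpa using hb)
  rw [betaComplexEq, ← Complex.ofReal_add, Complex.Gamma_ofReal, Complex.Gamma_ofReal,
    Complex.Gamma_ofReal, ← Complex.ofReal_mul, ← Complex.ofReal_mul] at h
  have h' : Real.Gamma a * Real.Gamma b =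
      Real.Gamma (a+b) * ∫ x in (0:ℝ)..1, x ^ (a-1) * (1-x) ^ (b-1) := by
    exact_mod_cast h
  have hG : Real.Gamma (a+b) ≠ 0 := (Real.Gamma_pos_of_pos (by linarith)).ne'
  rw [← integral_Ioc_eq_integral_Ioo, ← intervalIntegral.integral_of_le zero_le_one]
  field_simp [h']
  rw [h']; ring

lemma betaIntegrableOn {a b : ℝ} (ha : 0 < a) (hb : 0 < b) :
    IntegrableOn (fun x => x ^ (a-1) * (1-x) ^ (b-1)) (Ioo (0:ℝ) 1) := by
  have h := (Complex.betaIntegral_convergent (u := a) (v := b)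
    (by simpa using ha) (by simpa using hb)).1
  have h2 : IntegrableOn (fun x : ℝ => x ^ (a-1) * (1-x) ^ (b-1)) (Ioc (0:ℝ) 1) := by
    have := h.re
    refine this.congr ((ae_restrict_iff' measurableSet_Ioc).2 (Filter.Eventually.of_forall
      fun x hx => ?_))
    simp only
    rw [show ((a:ℂ)-1) = ((a-1:ℝ):ℂ) by push_cast; ring,
        show ((b:ℂ)-1) = ((b-1:ℝ):ℂ) by push_cast; ring,
        show ((1:ℂ) - (x:ℝ)) = ((1-x:ℝ):ℂ) by push_cast; ring,
        ← Complex.ofReal_cpow hx.1.le,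
        ← Complex.ofReal_cpow (by linarith [hx.2] : (0:ℝ) ≤ 1 - x),
        ← Complex.ofReal_mul]
    exact RCLike.ofReal_re _
  exact h2.mono_set Ioo_subset_Ioc_self

lemma hasDerivAt_logGamma {x : ℝ} (hx : 0 < x) :
    HasDerivAt (fun y => Real.log (Real.Gamma y)) (digamma x) x := by
  have hd : DifferentiableAt ℝ (fun y => Real.log (Real.Gamma y)) x := by
    refine DifferentiableAt.log (Real.differentiableAt_Gamma fun m => ?_)
      (Real.Gamma_pos_of_pos hx).ne'
    have : (0:ℝ) ≤ m := Nat.cast_nonneg m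
    intro h; rw [h] at hx; linarith
  exact hd.hasDerivAt

lemma logIntegral (v : ℝ) (hv : 0 < v) :
    ∫ u in Ioo (0:ℝ) 1, Real.log (1-u) * u ^ (v-1) =
      (digamma 1 - digamma (v+1)) / v := by
  set μ := volume.restrict (Ioo (0:ℝ) 1) with hμ
  set F : ℝ → ℝ → ℝ := fun s u => (1-u) ^ s * u ^ (v-1) with hF
  set F' : ℝ → ℝ → ℝ := fun s u => ((1-u) ^ s * Real.log (1-u)) * u ^ (v-1) with hF'
  have hlogm : Measurable fun u : ℝ => Real.log (1-u) :=
    Real.measurable_log.comp (measurable_const.sub measurable_id)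
  have hmeas : ∀ s, AEStronglyMeasurable (F s) μ := fun s => by
    have : Measurable (F s) := by simp only [hF]; fun_prop
    exact this.aestronglyMeasurable
  have hmeas' : AEStronglyMeasurable (F' 0) μ := by
    have : Measurable (F' 0) := by simp only [hF']; fun_prop
    exact this.aestronglyMeasurable
  have hF_int : Integrable (F 0) μ := by
    have h1 : IntegrableOn (fun x : ℝ => x ^ (v-1) * (1-x) ^ ((1:ℝ)-1)) (Ioo 0 1) :=
      betaIntegrableOn hv one_pos
    simp only [sub_self, Real.rpow_zero, mul_one] at h1
    simpa [F, Real.rpow_zero, hμ] using h1.integrable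
  have bound_int : Integrable (fun u : ℝ => 4 * (u ^ (v-1) * (1-u) ^ ((1/4:ℝ)-1))) μ :=
    (betaIntegrableOn hv (by norm_num)).const_mul 4
  have h_bound : ∀ᵐ u ∂μ, ∀ s ∈ Metric.ball (0:ℝ) (1/2),
      ‖F' s u‖ ≤ 4 * (u ^ (v-1) * (1-u) ^ ((1/4:ℝ)-1)) := by
    refine (ae_restrict_iff' measurableSet_Ioo).2 (Filter.Eventually.of_forall
      fun u hu s hs => ?_)
    obtain ⟨hu0, hu1⟩ := hu
    have ht0 : 0 < 1 - u := by linarith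
    have ht1 : 1 - u ≤ 1 := by linarith
    have hupos : (0:ℝ) < u ^ (v-1) := Real.rpow_pos_of_pos hu0 _
    have hlog : |Real.log (1-u)| ≤ 4 * (1-u) ^ (-(1/4):ℝ) := by
      rw [abs_of_nonpos (Real.log_nonpos ht0.le ht1)]
      have h := Real.log_le_rpow_div (x := (1-u)⁻¹) (by positivity)
        (by norm_num : (0:ℝ) < 1/4)
      rw [Real.log_inv, Real.inv_rpow ht0.le, ← Real.rpow_neg ht0.le] at h
      have h4 : (1-u) ^ (-(1/4):ℝ) / (1/4) = 4 * (1-u) ^ (-(1/4):ℝ) := by ring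
      linarith [h, h4.le]
    have hs' : -(1/2:ℝ) ≤ s := by
      have := abs_lt.1 (by simpa [Real.dist_eq] using hs)
      linarith [this.1]
    have hts : (1-u) ^ s ≤ (1-u) ^ (-(1/2):ℝ) :=
      Real.rpow_le_rpow_of_exponent_ge ht0 ht1 hs'
    have hnorm : ‖F' s u‖ = ((1-u) ^ s * |Real.log (1-u)|) * u ^ (v-1) := by
      rw [Real.norm_eq_abs, abs_mul, abs_mul,
        abs_of_nonneg (Real.rpow_pos_of_pos ht0 s).le, abs_of_nonneg hupos.le]
    rw [hnorm]
    calc ((1-u) ^ s * |Real.log (1-u)|) * u ^ (v-1)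
        ≤ ((1-u) ^ (-(1/2):ℝ) * (4 * (1-u) ^ (-(1/4):ℝ))) * u ^ (v-1) := by
          refine mul_le_mul (mul_le_mul hts hlog (abs_nonneg _)
            (Real.rpow_pos_of_pos ht0 _).le) le_rfl hupos.le (by positivity)
      _ = 4 * (u ^ (v-1) * (1-u) ^ ((1/4:ℝ)-1)) := by
          rw [show ((1/4:ℝ)-1) = -(1/2) + -(1/4) by norm_num, Real.rpow_add ht0]
          ring
  have h_diff : ∀ᵐ u ∂μ, ∀ s ∈ Metric.ball (0:ℝ) (1/2),
      HasDerivAt (fun s => F s u) (F' s u) s := by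
    refine (ae_restrict_iff' measurableSet_Ioo).2 (Filter.Eventually.of_forall
      fun u hu s _ => ?_)
    have ht0 : 0 < 1 - u := by linarith [hu.2]
    exact ((Real.hasStrictDerivAt_const_rpow ht0 s).hasDerivAt).mul_const _
  obtain ⟨-, hA⟩ := hasDerivAt_integral_of_dominated_loc_of_deriv_le
    (Metric.ball_mem_nhds (0:ℝ) (by norm_num : (0:ℝ) < 1/2)) (Filter.Eventually.of_forall hmeas) hF_int hmeas'
    h_bound bound_int h_diff
  -- the explicit formula near 0
  set g : ℝ → ℝ := fun s =>
    Real.log (Real.Gamma (s+1)) + Real.log (Real.Gamma v) - Real.log (Real.Gamma (v+s+1))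
    with hgdef
  have h1 : HasDerivAt (fun s : ℝ => Real.log (Real.Gamma (s+1))) (digamma 1) 0 := by
    have := (hasDerivAt_logGamma (x := (0:ℝ)+1) (by norm_num)).comp (0:ℝ)
      ((hasDerivAt_id (0:ℝ)).add_const 1)
    simpa [Function.comp_def] using this
  have h2 : HasDerivAt (fun s : ℝ => Real.log (Real.Gamma (v+s+1))) (digamma (v+1)) 0 := by
    have hin : HasDerivAt (fun s : ℝ => v+s+1) 1 0 := by
      simpa using (((hasDerivAt_id (0:ℝ)).const_add v).add_const 1)
    have := (hasDerivAt_logGamma (x := v+0+1) (by linarith)).comp 0 hin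
    simpa [Function.comp_def] using this
  have hg : HasDerivAt g (digamma 1 - digamma (v+1)) 0 :=
    (h1.add_const (Real.log (Real.Gamma v))).sub h2
  have hg0 : Real.exp (g 0) = 1/v := by
    simp only [hgdef, zero_add, add_zero]
    rw [Real.exp_sub, Real.exp_add, Real.exp_log (Real.Gamma_pos_of_pos one_pos),
      Real.exp_log (Real.Gamma_pos_of_pos hv),
      Real.exp_log (Real.Gamma_pos_of_pos (by linarith : (0:ℝ) < v+1)),
      Real.Gamma_one, Real.Gamma_add_one hv.ne']
    rw [one_mul]
    rw [mul_comm v (Real.Gamma v), ← div_div,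
      div_self (Real.Gamma_pos_of_pos hv).ne']
  have hAB : (fun s => ∫ u, F s u ∂μ) =ᶠ[nhds 0] fun s => Real.exp (g s) := by
    filter_upwards [Ioo_mem_nhds (by norm_num : -(1/2:ℝ) < 0)
      (by norm_num : (0:ℝ) < 1/2)] with s hs
    have hs1 : (0:ℝ) < s + 1 := by linarith [hs.1]
    calc (∫ u, F s u ∂μ) = ∫ x in Ioo (0:ℝ) 1, x ^ (v-1) * (1-x) ^ ((s+1)-1) := by
          refine setIntegral_congr_fun measurableSet_Ioo fun x hx => ?_
          simp only [F, add_sub_cancel_right]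
          ring
      _ = Real.Gamma v * Real.Gamma (s+1) / Real.Gamma (v+(s+1)) := betaReal hv hs1
      _ = Real.exp (g s) := by
          rw [hgdef]
          simp only
          rw [Real.exp_sub, Real.exp_add, Real.exp_log (Real.Gamma_pos_of_pos hs1),
            Real.exp_log (Real.Gamma_pos_of_pos hv),
            Real.exp_log (Real.Gamma_pos_of_pos (by linarith : (0:ℝ) < v+s+1)),
            ← add_assoc]
          ring
  have hA' : HasDerivAt (fun s => ∫ u, F s u ∂μ)
      (Real.exp (g 0) * (digamma 1 - digamma (v+1))) 0 :=
    (hg.exp).congr_of_eventuallyEq hAB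
  have huniq := hA.unique hA'
  have hfin : (∫ u, F' 0 u ∂μ) = ∫ u in Ioo (0:ℝ) 1, Real.log (1-u) * u ^ (v-1) := by
    rw [hμ]
    refine setIntegral_congr_fun measurableSet_Ioo fun u hu => ?_
    simp [F', Real.rpow_zero]
  rw [hfin] at huniq
  rw [huniq, hg0]
  ring

/-- The mean of the GE distribution: `∫₀^∞ x f(x; λ, ν) dx = (ψ(ν+1) − ψ(1)) / λ`. -/
theorem ge_mean (l v : ℝ) (hl : 0 < l) (hv : 0 < v) :
    ∫ x in Ioi (0 : ℝ), x * geDensity l v x = (digamma (v + 1) - digamma 1) / l := by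
  set f : ℝ → ℝ := fun x => 1 - Real.exp (-(l * x)) with hf
  have himg : f '' Ioi 0 = Ioo 0 1 := by
    ext y
    constructor
    · rintro ⟨x, hx, rfl⟩
      have hx0 : 0 < l * x := mul_pos hl hx
      have he1 : Real.exp (-(l * x)) < 1 := Real.exp_lt_one_iff.2 (by linarith)
      have he0 : 0 < Real.exp (-(l * x)) := Real.exp_pos _
      exact ⟨by simp only [hf]; linarith, by simp only [hf]; linarith⟩
    · rintro ⟨hy0, hy1⟩
      have h1y : 0 < 1 - y := by linarith
      have hlog : Real.log (1 - y) < 0 := Real.log_neg h1y (by linarith)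
      refine ⟨-(Real.log (1 - y)) / l, div_pos (by linarith) hl, ?_⟩
      simp only [hf]
      rw [show -(l * (-(Real.log (1 - y)) / l)) = Real.log (1 - y) by
        field_simp, Real.exp_log h1y]
      ring
  have hderiv : ∀ x ∈ Ioi (0:ℝ),
      HasDerivWithinAt f (l * Real.exp (-(l * x))) (Ioi 0) x := by
    intro x _
    have h1 : HasDerivAt (fun x : ℝ => -(l * x)) (-l) x := by
      simpa [Pi.neg_def] using ((hasDerivAt_id x).const_mul l).neg
    have h2 := (Real.hasDerivAt_exp (-(l * x))).comp x h1
    have h3 : HasDerivAt f (l * Real.exp (-(l * x))) x := by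
      have := h2.const_sub 1
      simpa [hf, Function.comp, mul_comm] using this
    exact h3.hasDerivWithinAt
  have hinj : InjOn f (Ioi 0) := by
    intro a _ b _ hab
    simp only [hf, sub_right_inj] at hab
    have := Real.exp_injective hab
    have := neg_injective this
    exact mul_left_cancel₀ hl.ne' this
  have hchg := integral_image_eq_integral_abs_deriv_smul measurableSet_Ioi hderiv hinj
    (fun u => Real.log (1 - u) * u ^ (v - 1))
  rw [himg] at hchg
  rw [logIntegral v hv] at hchg
  have hrhs : (∫ x in Ioi (0:ℝ), |l * Real.exp (-(l * x))| •
      (Real.log (1 - f x) * (f x) ^ (v - 1))) =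
      ∫ x in Ioi (0:ℝ), (-(l/v)) * (x * geDensity l v x) := by
    refine setIntegral_congr_fun measurableSet_Ioi fun x hx => ?_
    have he0 : 0 < Real.exp (-(l * x)) := Real.exp_pos _
    have habs : |l * Real.exp (-(l * x))| = l * Real.exp (-(l * x)) :=
      abs_of_pos (by positivity)
    simp only [hf, habs, smul_eq_mul, sub_sub_cancel, Real.log_exp, geDensity]
    field_simp
  rw [hrhs, MeasureTheory.integral_const_mul] at hchg
  have hv' : v ≠ 0 := hv.ne'
  have hl' : l ≠ 0 := hl.ne'
  field_simp at hchg ⊢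
  linarith
end

section
/- Let λ > 0, ν > 0, let f(x; λ, ν) be the GE density, and let μ = (ψ(ν + 1) − ψ(1)) / λ be the GE mean. Then the variance of the GE distribution satisfies ∫₀^∞ (x − μ)² f(x; λ, ν) dx = (ψ'(1) − ψ'(ν + 1)) / λ², where ψ' is the trigamma function (the derivative of the digamma function). -/
open Real Set MeasureTheory

/-- The trigamma function `ψ'`, the derivative of the digamma function. -/
noncomputable def trigamma : ℝ → ℝ := deriv digamma

namespace GEVarAux

lemma integrableOn_beta {a b : ℝ} (ha : 0 < a) (hb : 0 < b) :
    IntegrableOn (fun u : ℝ => u ^ (a-1) * (1-u) ^ (b-1)) (Ioo 0 1) := by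
  have h := (Complex.betaIntegral_convergent (u := (a:ℂ)) (v := (b:ℂ)) (by simpa) (by simpa))
  have h2 : IntegrableOn (fun x : ℝ => (x:ℂ) ^ ((a:ℂ) - 1) * (1 - (x:ℂ)) ^ ((b:ℂ) - 1)) (Ioo 0 1) := by
    have := (intervalIntegrable_iff_integrableOn_Ioc_of_le (by norm_num : (0:ℝ) ≤ 1)).mp h
    exact this.mono_set Ioo_subset_Ioc_self
  have h3 := h2.norm
  refine (integrableOn_congr_fun (fun x hx => ?_) measurableSet_Ioo).mp h3
  obtain ⟨hx0, hx1⟩ := hx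
  have e1 : ((1:ℂ) - (x:ℂ)) = ((1 - x : ℝ) : ℂ) := by push_cast; ring
  have e2 : ((a:ℂ) - 1) = ((a-1:ℝ):ℂ) := by push_cast; ring
  have e3 : ((b:ℂ) - 1) = ((b-1:ℝ):ℂ) := by push_cast; ring
  rw [norm_mul, e1, e2, e3,
    Complex.norm_cpow_eq_rpow_re_of_pos hx0, Complex.norm_cpow_eq_rpow_re_of_pos (by linarith)]
  simp

lemma log_pow_bound {b : ℝ} (hb : 0 < b) (k : ℕ) {t : ℝ} (ht : t ∈ Ioo (0:ℝ) 1) :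
    |Real.log t| ^ k ≤ (2*k/b)^k * t ^ (-(b/2)) := by
  obtain ⟨ht0, ht1⟩ := ht
  have htpow : (1:ℝ) ≤ t ^ (-(b/2)) := by
    rw [← Real.rpow_zero t]
    exact Real.rpow_le_rpow_of_exponent_ge ht0 ht1.le (by linarith)
  rcases Nat.eq_zero_or_pos k with hk | hk
  · simp [hk, htpow]
  · have hkR : (0:ℝ) < k := by exact_mod_cast hk
    have key : |Real.log t| ≤ (2*k/b) * t ^ (-(b/(2*k))) := by
      have hlt : Real.log t < 0 := Real.log_neg ht0 ht1
      rw [abs_of_neg hlt]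
      have hy : (0:ℝ) < t ^ (b/(2*k)) := Real.rpow_pos_of_pos ht0 _
      have h1 : Real.log (t ^ (b/(2*k))) ≥ 1 - (t ^ (b/(2*k)))⁻¹ := by
        have := Real.log_le_sub_one_of_pos (x := (t ^ (b/(2*k)))⁻¹) (by positivity)
        rw [Real.log_inv] at this
        linarith
      rw [Real.log_rpow ht0] at h1
      have hbk : (0:ℝ) < b/(2*k) := by positivity
      have h2 : -Real.log t ≤ (2*k/b) * ((t ^ (b/(2*k)))⁻¹ - 1) := by
        have := mul_le_mul_of_nonneg_left (by linarith : -(b/(2*k) * Real.log t) ≤ (t ^ (b/(2*k)))⁻¹ - 1)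
          (by positivity : (0:ℝ) ≤ 2*k/b)
        calc -Real.log t = (2*k/b) * (-(b/(2*k) * Real.log t)) := by field_simp
        _ ≤ (2*k/b) * ((t ^ (b/(2*k)))⁻¹ - 1) := this
      have h3 : (t ^ (b/(2*k)))⁻¹ - 1 ≤ (t ^ (b/(2*k)))⁻¹ := by linarith
      have h4 : (t ^ (b/(2*k)))⁻¹ = t ^ (-(b/(2*k))) := by rw [← Real.rpow_neg ht0.le]
      calc -Real.log t ≤ (2*k/b) * ((t ^ (b/(2*k)))⁻¹ - 1) := h2
        _ ≤ (2*k/b) * (t ^ (b/(2*k)))⁻¹ := by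
            apply mul_le_mul_of_nonneg_left h3 (by positivity)
        _ = (2*k/b) * t ^ (-(b/(2*k))) := by rw [h4]
    calc |Real.log t| ^ k ≤ ((2*k/b) * t ^ (-(b/(2*k)))) ^ k :=
          pow_le_pow_left₀ (abs_nonneg _) key k
      _ = (2*k/b)^k * (t ^ (-(b/(2*k))))^k := mul_pow _ _ _
      _ = (2*k/b)^k * t ^ (-(b/(2*k)) * k) := by
          rw [← Real.rpow_natCast (t ^ (-(b/(2*k)))) k, ← Real.rpow_mul ht0.le]
      _ = (2*k/b)^k * t ^ (-(b/2)) := by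
          congr 2
          field_simp

lemma contOn_integrand (a s : ℝ) (k : ℕ) :
    ContinuousOn (fun u : ℝ => u ^ (a-1) * (1-u) ^ (s-1) * Real.log (1-u) ^ k) (Ioo 0 1) := by
  have h1 : ContinuousOn (fun u : ℝ => u ^ (a-1)) (Ioo 0 1) :=
    continuousOn_id.rpow_const (fun x hx => Or.inl (ne_of_gt hx.1))
  have hc : ContinuousOn (fun u : ℝ => 1 - u) (Ioo 0 1) :=
    (continuous_const.sub continuous_id).continuousOn
  have hne : ∀ x ∈ Ioo (0:ℝ) 1, 1 - x ≠ 0 := fun x hx => by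
    have := hx.2; intro h; linarith [hx.2]
  have h2 : ContinuousOn (fun u : ℝ => (1-u) ^ (s-1)) (Ioo 0 1) :=
    hc.rpow_const (fun x hx => Or.inl (hne x hx))
  have h3 : ContinuousOn (fun u : ℝ => Real.log (1-u) ^ k) (Ioo 0 1) :=
    (hc.log hne).pow k
  exact (h1.mul h2).mul h3

lemma integrableOn_beta_abslog {a b : ℝ} (ha : 0 < a) (hb : 0 < b) (k : ℕ) :
    IntegrableOn (fun u : ℝ => u ^ (a-1) * (1-u) ^ (b-1) * |Real.log (1-u)| ^ k) (Ioo 0 1) := by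
  have hmeas : AEStronglyMeasurable
      (fun u : ℝ => u ^ (a-1) * (1-u) ^ (b-1) * |Real.log (1-u)| ^ k)
      (volume.restrict (Ioo 0 1)) := by
    apply ContinuousOn.aestronglyMeasurable _ measurableSet_Ioo
    have h1 : ContinuousOn (fun u : ℝ => u ^ (a-1)) (Ioo 0 1) :=
      continuousOn_id.rpow_const (fun x hx => Or.inl (ne_of_gt hx.1))
    have hc : ContinuousOn (fun u : ℝ => 1 - u) (Ioo 0 1) :=
      (continuous_const.sub continuous_id).continuousOn
    have hne : ∀ x ∈ Ioo (0:ℝ) 1, 1 - x ≠ 0 := fun x hx => by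
      intro h; linarith [hx.2]
    exact (h1.mul (hc.rpow_const (fun x hx => Or.inl (hne x hx)))).mul
      (((hc.log hne).abs).pow k)
  have hg : IntegrableOn
      (fun u : ℝ => (2*k/b)^k * (u ^ (a-1) * (1-u) ^ (b/2-1))) (Ioo 0 1) :=
    (integrableOn_beta ha (by positivity)).const_mul _
  refine Integrable.mono' hg hmeas ?_
  rw [ae_restrict_iff' measurableSet_Ioo]
  refine Filter.Eventually.of_forall (fun u hu => ?_)
  obtain ⟨hu0, hu1⟩ := hu
  have h1u : (0:ℝ) < 1 - u := by linarith
  have hbnd := log_pow_bound hb k (t := 1-u) ⟨h1u, by linarith⟩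
  have hnn : (0:ℝ) ≤ u ^ (a-1) * (1-u) ^ (b-1) := by positivity
  rw [Real.norm_eq_abs, abs_of_nonneg (by positivity)]
  calc u ^ (a-1) * (1-u) ^ (b-1) * |Real.log (1-u)| ^ k
      ≤ u ^ (a-1) * (1-u) ^ (b-1) * ((2*k/b)^k * (1-u) ^ (-(b/2))) :=
        mul_le_mul_of_nonneg_left hbnd hnn
    _ = (2*k/b)^k * (u ^ (a-1) * ((1-u) ^ (b-1) * (1-u) ^ (-(b/2)))) := by ring
    _ = (2*k/b)^k * (u ^ (a-1) * (1-u) ^ (b/2-1)) := by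
        rw [← Real.rpow_add h1u, show b - 1 + -(b/2) = b/2 - 1 by ring]

lemma integrableOn_beta_log {a b : ℝ} (ha : 0 < a) (hb : 0 < b) (k : ℕ) :
    IntegrableOn (fun u : ℝ => u ^ (a-1) * (1-u) ^ (b-1) * Real.log (1-u) ^ k) (Ioo 0 1) := by
  refine Integrable.mono' (integrableOn_beta_abslog ha hb k)
    ((contOn_integrand a b k).aestronglyMeasurable measurableSet_Ioo) ?_
  rw [ae_restrict_iff' measurableSet_Ioo]
  refine Filter.Eventually.of_forall (fun u hu => ?_)
  obtain ⟨hu0, hu1⟩ := hu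
  have h1u : (0:ℝ) < 1 - u := by linarith
  rw [Real.norm_eq_abs, abs_mul, abs_mul, abs_pow,
    abs_of_nonneg (Real.rpow_nonneg hu0.le _), abs_of_nonneg (Real.rpow_nonneg h1u.le _)]

lemma hasDerivAt_betaF {a : ℝ} (ha : 0 < a) (k : ℕ) {s : ℝ} (hs : 0 < s) :
    HasDerivAt (fun t => ∫ u in Ioo (0:ℝ) 1, u ^ (a-1) * (1-u) ^ (t-1) * Real.log (1-u) ^ k)
      (∫ u in Ioo (0:ℝ) 1, u ^ (a-1) * (1-u) ^ (s-1) * Real.log (1-u) ^ (k+1)) s := by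
  have main := hasDerivAt_integral_of_dominated_loc_of_deriv_le (s := Metric.ball s (s/2))
    (μ := volume.restrict (Ioo (0:ℝ) 1))
    (F := fun t u => u ^ (a-1) * (1-u) ^ (t-1) * Real.log (1-u) ^ k)
    (F' := fun t u => u ^ (a-1) * (1-u) ^ (t-1) * Real.log (1-u) ^ (k+1))
    (x₀ := s)
    (bound := fun u => u ^ (a-1) * (1-u) ^ (s/2-1) * |Real.log (1-u)| ^ (k+1))
    (Metric.ball_mem_nhds _ (by positivity))
    (Filter.Eventually.of_forall fun t =>
      (contOn_integrand a t k).aestronglyMeasurable measurableSet_Ioo)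
    (integrableOn_beta_log ha hs k)
    ((contOn_integrand a s (k+1)).aestronglyMeasurable measurableSet_Ioo)
    ?_ (integrableOn_beta_abslog ha (by positivity) (k+1)) ?_
  · exact main.2
  · rw [ae_restrict_iff' measurableSet_Ioo]
    refine Filter.Eventually.of_forall (fun u hu t ht => ?_)
    obtain ⟨hu0, hu1⟩ := hu
    have h1u : (0:ℝ) < 1 - u := by linarith
    have hts : s/2 - 1 ≤ t - 1 := by
      have := abs_lt.mp (mem_ball_iff_norm.mp ht)
      linarith [this.1]
    have hmono : (1-u) ^ (t-1) ≤ (1-u) ^ (s/2-1) :=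
      Real.rpow_le_rpow_of_exponent_ge h1u (by linarith) hts
    rw [Real.norm_eq_abs, abs_mul, abs_mul, abs_pow,
      abs_of_nonneg (Real.rpow_nonneg hu0.le _), abs_of_nonneg (Real.rpow_nonneg h1u.le _)]
    have : (0:ℝ) ≤ u ^ (a-1) := Real.rpow_nonneg hu0.le _
    have h2 : (0:ℝ) ≤ |Real.log (1-u)| ^ (k+1) := by positivity
    calc u ^ (a-1) * (1-u) ^ (t-1) * |Real.log (1-u)| ^ (k+1)
        ≤ u ^ (a-1) * (1-u) ^ (s/2-1) * |Real.log (1-u)| ^ (k+1) := by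
          apply mul_le_mul_of_nonneg_right _ h2
          exact mul_le_mul_of_nonneg_left hmono this
      _ = _ := rfl
  · rw [ae_restrict_iff' measurableSet_Ioo]
    refine Filter.Eventually.of_forall (fun u hu t ht => ?_)
    obtain ⟨hu0, hu1⟩ := hu
    have h1u : (0:ℝ) < 1 - u := by linarith
    have hd : HasDerivAt (fun t : ℝ => (1-u) ^ (t-1))
        ((1-u) ^ (t-1) * Real.log (1-u) * 1) t :=
      ((Real.hasStrictDerivAt_const_rpow h1u (t-1)).hasDerivAt).comp t
        ((hasDerivAt_id t).sub_const 1)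
    have := (hd.const_mul (u ^ (a-1))).mul_const (Real.log (1-u) ^ k)
    refine this.congr_deriv ?_
    ring

lemma beta_eq {a s : ℝ} (ha : 0 < a) (hs : 0 < s) :
    ∫ u in Ioo (0:ℝ) 1, u ^ (a-1) * (1-u) ^ (s-1)
      = Real.Gamma a * Real.Gamma s / Real.Gamma (a+s) := by
  have h := Complex.Gamma_mul_Gamma_eq_betaIntegral (s := (a:ℂ)) (t := (s:ℂ))
    (by simpa) (by simpa)
  have key : ∀ x ∈ uIcc (0:ℝ) 1, (x:ℂ) ^ ((a:ℂ)-1) * (1-(x:ℂ)) ^ ((s:ℂ)-1)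
      = ((x ^ (a-1) * (1-x) ^ (s-1) : ℝ) : ℂ) := by
    intro x hx
    rw [uIcc_of_le (by norm_num : (0:ℝ) ≤ 1)] at hx
    rw [show ((a:ℂ)-1) = ((a-1:ℝ):ℂ) by push_cast; ring,
      show ((s:ℂ)-1) = ((s-1:ℝ):ℂ) by push_cast; ring,
      show (1-(x:ℂ)) = ((1-x:ℝ):ℂ) by push_cast; ring,
      ← Complex.ofReal_cpow hx.1, ← Complex.ofReal_cpow (by linarith [hx.2]),
      ← Complex.ofReal_mul]
  have hb : Complex.betaIntegral (a:ℂ) (s:ℂ)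
      = ((∫ u in Ioo (0:ℝ) 1, u ^ (a-1) * (1-u) ^ (s-1) : ℝ) : ℂ) := by
    rw [Complex.betaIntegral, intervalIntegral.integral_congr key,
      intervalIntegral.integral_ofReal,
      intervalIntegral.integral_of_le (by norm_num : (0:ℝ) ≤ 1),
      integral_Ioc_eq_integral_Ioo]
  rw [hb, ← Complex.ofReal_add, Complex.Gamma_ofReal, Complex.Gamma_ofReal,
    Complex.Gamma_ofReal, ← Complex.ofReal_mul, ← Complex.ofReal_mul,
    Complex.ofReal_inj] at h
  have hΓ : Real.Gamma (a+s) ≠ 0 := (Real.Gamma_pos_of_pos (by linarith)).ne'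
  field_simp
  linarith [h]

lemma Gamma_ne_neg_nat {x : ℝ} (hx : 0 < x) : ∀ m : ℕ, x ≠ -(m:ℝ) := by
  intro m h
  have : (0:ℝ) ≤ m := Nat.cast_nonneg m
  linarith

lemma digamma_eq {x : ℝ} (hx : 0 < x) :
    digamma x = deriv Real.Gamma x / Real.Gamma x := by
  have hΓ := (Real.differentiableAt_Gamma (Gamma_ne_neg_nat hx)).hasDerivAt
  have hpos := Real.Gamma_pos_of_pos hx
  have hlog := (Real.hasDerivAt_log hpos.ne').comp x hΓ
  have : digamma x = (Real.Gamma x)⁻¹ * deriv Real.Gamma x := hlog.deriv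
  rw [this]; ring

lemma hasDerivAt_Gamma {x : ℝ} (hx : 0 < x) :
    HasDerivAt Real.Gamma (digamma x * Real.Gamma x) x := by
  have hΓ := (Real.differentiableAt_Gamma (Gamma_ne_neg_nat hx)).hasDerivAt
  have hpos := Real.Gamma_pos_of_pos hx
  have : digamma x * Real.Gamma x = deriv Real.Gamma x := by
    rw [digamma_eq hx]; field_simp
  rw [this]; exact hΓ

lemma analyticOnNhd_Gamma : AnalyticOnNhd ℝ Real.Gamma (Ioi 0) := by
  intro x hx
  have hU : IsOpen {z : ℂ | 0 < z.re} := isOpen_lt continuous_const Complex.continuous_re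
  have hdiff : DifferentiableOn ℂ Complex.Gamma {z : ℂ | 0 < z.re} := by
    intro z hz
    refine (Complex.differentiableAt_Gamma z (fun m => ?_)).differentiableWithinAt
    intro hzm
    rw [hzm] at hz
    simp only [mem_setOf_eq, Complex.neg_re, Complex.natCast_re] at hz
    have : (0:ℝ) ≤ m := Nat.cast_nonneg m
    linarith
  have hC : AnalyticAt ℂ Complex.Gamma (x:ℂ) :=
    hdiff.analyticAt (hU.mem_nhds (by simpa using hx))
  have hR : AnalyticAt ℝ (fun y : ℝ => (Complex.reCLM) (Complex.Gamma (Complex.ofRealCLM y))) x :=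
    (Complex.reCLM.analyticAt _).comp ((hC.restrictScalars).comp (Complex.ofRealCLM.analyticAt x))
  refine hR.congr (Filter.Eventually.of_forall fun y => ?_)
  simp [Complex.Gamma_ofReal]

lemma hasDerivAt_digamma {x : ℝ} (hx : 0 < x) :
    HasDerivAt digamma (trigamma x) x := by
  have heq : digamma =ᶠ[nhds x] fun y => deriv Real.Gamma y / Real.Gamma y := by
    filter_upwards [IsOpen.mem_nhds isOpen_Ioi hx] with y hy
    exact digamma_eq hy
  have hd : DifferentiableAt ℝ (fun y => deriv Real.Gamma y / Real.Gamma y) x := by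
    have h1 : DifferentiableAt ℝ (deriv Real.Gamma) x :=
      ((analyticOnNhd_Gamma.deriv_of_isOpen isOpen_Ioi) x hx).differentiableAt
    exact h1.div (Real.differentiableAt_Gamma (Gamma_ne_neg_nat hx))
      (Real.Gamma_pos_of_pos hx).ne'
  have : DifferentiableAt ℝ digamma x := hd.congr_of_eventuallyEq heq
  exact this.hasDerivAt

lemma hasDerivAt_G (v : ℝ) (hv : 0 < v) {s : ℝ} (hs : 0 < s) :
    HasDerivAt (fun t => Real.Gamma v * Real.Gamma t / Real.Gamma (v+t))
      ((Real.Gamma v * Real.Gamma s / Real.Gamma (v+s)) * (digamma s - digamma (v+s))) s := by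
  have h1 : HasDerivAt (fun t => Real.Gamma v * Real.Gamma t)
      (Real.Gamma v * (digamma s * Real.Gamma s)) s := (hasDerivAt_Gamma hs).const_mul _
  have h2 : HasDerivAt (fun t => Real.Gamma (v+t))
      (digamma (v+s) * Real.Gamma (v+s) * 1) s :=
    (hasDerivAt_Gamma (by linarith : (0:ℝ) < v + s)).comp s ((hasDerivAt_id s).const_add v)
  have hne : Real.Gamma (v+s) ≠ 0 := (Real.Gamma_pos_of_pos (by linarith)).ne'
  have := h1.div h2 hne
  refine this.congr_deriv ?_
  field_simp

end GEVarAux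

open GEVarAux in
/-- The variance of the GE distribution: with mean `μ = (ψ(ν+1) − ψ(1))/λ`,
`∫₀^∞ (x − μ)² f(x; λ, ν) dx = (ψ'(1) − ψ'(ν+1)) / λ²`. -/
theorem ge_variance (l v : ℝ) (hl : 0 < l) (hv : 0 < v)
    (μ : ℝ) (hμ : μ = (digamma (v + 1) - digamma 1) / l) :
    ∫ x in Ioi (0 : ℝ), (x - μ) ^ 2 * geDensity l v x =
      (trigamma 1 - trigamma (v + 1)) / l ^ 2 := by
  set m : ℝ := digamma (v+1) - digamma 1 with hm
  set Δ : ℝ := trigamma 1 - trigamma (v+1) with hΔ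
  set G : ℝ → ℝ := fun t => Real.Gamma v * Real.Gamma t / Real.Gamma (v+t) with hG
  have hΓv : Real.Gamma v ≠ 0 := (Real.Gamma_pos_of_pos hv).ne'
  have hG1 : G 1 = 1/v := by
    rw [hG]
    simp only [Real.Gamma_one, Real.Gamma_add_one hv.ne']
    field_simp
  -- F₀ = G on Ioi 0
  have hF0G : ∀ t ∈ Ioi (0:ℝ),
      (∫ u in Ioo (0:ℝ) 1, u^(v-1) * (1-u)^(t-1) * Real.log (1-u)^0) = G t := by
    intro t ht
    simp only [hG]
    rw [← beta_eq hv ht]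
    exact setIntegral_congr_fun measurableSet_Ioo (fun u hu => by norm_num)
  -- first log-integral identity
  have hH : ∀ t : ℝ, 0 < t →
      (∫ u in Ioo (0:ℝ) 1, u^(v-1) * (1-u)^(t-1) * Real.log (1-u)^1)
        = G t * (digamma t - digamma (v+t)) := by
    intro t ht
    have hd1 := hasDerivAt_betaF hv 0 ht
    have heq : (fun r => ∫ u in Ioo (0:ℝ) 1, u^(v-1) * (1-u)^(r-1) * Real.log (1-u)^0)
        =ᶠ[nhds t] G := by
      filter_upwards [IsOpen.mem_nhds isOpen_Ioi ht] with r hr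
      exact hF0G r hr
    have hd2 : HasDerivAt G
        (∫ u in Ioo (0:ℝ) 1, u^(v-1) * (1-u)^(t-1) * Real.log (1-u)^(0+1)) t :=
      hd1.congr_of_eventuallyEq heq.symm
    exact hd2.unique (hasDerivAt_G v hv ht)
  -- second log-integral at s = 1
  have hI2 : (∫ u in Ioo (0:ℝ) 1, u^(v-1) * (1-u)^((1:ℝ)-1) * Real.log (1-u)^2)
      = (G 1 * (digamma 1 - digamma (v+1))) * (digamma 1 - digamma (v+1))
        + G 1 * (trigamma 1 - trigamma (v+1) * 1) := by
    have hd1 := hasDerivAt_betaF hv 1 one_pos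
    have heq : (fun r => ∫ u in Ioo (0:ℝ) 1, u^(v-1)*(1-u)^(r-1)*Real.log (1-u)^1)
        =ᶠ[nhds 1] fun t => G t * (digamma t - digamma (v+t)) := by
      filter_upwards [IsOpen.mem_nhds isOpen_Ioi (mem_Ioi.mpr one_pos)] with r hr
      exact hH r hr
    have hd2 : HasDerivAt (fun t => G t * (digamma t - digamma (v+t)))
        (∫ u in Ioo (0:ℝ) 1, u^(v-1)*(1-u)^((1:ℝ)-1)*Real.log (1-u)^(1+1)) 1 :=
      hd1.congr_of_eventuallyEq heq.symm
    have hψ1 : HasDerivAt digamma (trigamma 1) 1 := hasDerivAt_digamma one_pos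
    have hψv : HasDerivAt (fun t : ℝ => digamma (v+t)) (trigamma (v+1) * 1) 1 :=
      (hasDerivAt_digamma (by linarith)).comp 1 ((hasDerivAt_id 1).const_add v)
    have hd3 : HasDerivAt (fun t => G t * (digamma t - digamma (v+t)))
        ((G 1 * (digamma 1 - digamma (v+1))) * (digamma 1 - digamma (v+1))
          + G 1 * (trigamma 1 - trigamma (v+1) * 1)) 1 :=
      (hasDerivAt_G v hv one_pos).mul (hψ1.sub hψv)
    exact hd2.unique hd3
  -- numerical values of the three integrals
  have hJ0 : (∫ u in Ioo (0:ℝ) 1, u^(v-1)) = 1/v := by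
    rw [← hG1, ← hF0G 1 (mem_Ioi.mpr one_pos)]
    refine setIntegral_congr_fun measurableSet_Ioo (fun u hu => ?_)
    norm_num
  have hJ1 : (∫ u in Ioo (0:ℝ) 1, u^(v-1) * Real.log (1-u)) = -(m/v) := by
    have h := hH 1 one_pos
    rw [hG1] at h
    have e : (∫ u in Ioo (0:ℝ) 1, u^(v-1) * Real.log (1-u))
        = ∫ u in Ioo (0:ℝ) 1, u^(v-1) * (1-u)^((1:ℝ)-1) * Real.log (1-u)^1 := by
      refine setIntegral_congr_fun measurableSet_Ioo (fun u hu => ?_)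
      norm_num
    rw [e, h, hm]
    field_simp
    ring
  have hJ2 : (∫ u in Ioo (0:ℝ) 1, u^(v-1) * Real.log (1-u)^2) = (m^2 + Δ)/v := by
    have e : (∫ u in Ioo (0:ℝ) 1, u^(v-1) * Real.log (1-u)^2)
        = ∫ u in Ioo (0:ℝ) 1, u^(v-1) * (1-u)^((1:ℝ)-1) * Real.log (1-u)^2 := by
      refine setIntegral_congr_fun measurableSet_Ioo (fun u hu => ?_)
      norm_num
    rw [e, hI2, hG1, hm, hΔ]
    field_simp
    ring
  -- integrability of the three pieces
  have hint2 : IntegrableOn (fun u : ℝ => u^(v-1) * Real.log (1-u)^2) (Ioo 0 1) := by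
    refine (integrableOn_congr_fun (fun u hu => ?_) measurableSet_Ioo).mp
      (integrableOn_beta_log hv one_pos 2)
    norm_num
  have hint1 : IntegrableOn (fun u : ℝ => u^(v-1) * Real.log (1-u)) (Ioo 0 1) := by
    refine (integrableOn_congr_fun (fun u hu => ?_) measurableSet_Ioo).mp
      (integrableOn_beta_log hv one_pos 1)
    norm_num
  have hint0 : IntegrableOn (fun u : ℝ => u^(v-1)) (Ioo 0 1) := by
    refine (integrableOn_congr_fun (fun u hu => ?_) measurableSet_Ioo).mp
      (integrableOn_beta_log hv one_pos 0)
    norm_num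
  -- change of variables
  have hsub : (∫ x in Ioi (0:ℝ), (x-μ)^2 * geDensity l v x)
      = ∫ u in Ioo (0:ℝ) 1, (-Real.log (1-u)/l - μ)^2 * (v * u^(v-1)) := by
    have himg : (fun x : ℝ => 1 - Real.exp (-(l*x))) '' Ioi 0 = Ioo 0 1 := by
      ext u
      constructor
      · rintro ⟨x, hx, rfl⟩
        have hx' : (0:ℝ) < x := hx
        have hlx : 0 < l * x := mul_pos hl hx'
        have he1 : Real.exp (-(l*x)) < 1 := by
          rw [Real.exp_lt_one_iff]; linarith
        have he0 : 0 < Real.exp (-(l*x)) := Real.exp_pos _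
        exact mem_Ioo.mpr ⟨by simp only []; linarith, by simp only []; linarith⟩
      · rintro ⟨hu0, hu1⟩
        refine ⟨-Real.log (1-u)/l, ?_, ?_⟩
        · have : Real.log (1-u) < 0 := Real.log_neg (by linarith) (by linarith)
          exact mem_Ioi.mpr (div_pos (by linarith) hl)
        · have h1u : (0:ℝ) < 1 - u := by linarith
          show 1 - Real.exp (-(l * (-Real.log (1-u)/l))) = u
          rw [show -(l * (-Real.log (1-u)/l)) = Real.log (1-u) by field_simp,
            Real.exp_log h1u]
          ring
    have hderiv : ∀ x ∈ Ioi (0:ℝ), HasDerivWithinAt (fun x : ℝ => 1 - Real.exp (-(l*x)))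
        (l * Real.exp (-(l*x))) (Ioi 0) x := by
      intro x hx
      have h1 : HasDerivAt (fun x : ℝ => -(l*x)) (-l) x := by
        simpa [Pi.neg_def] using ((hasDerivAt_id x).const_mul l).neg
      have h2 := (Real.hasDerivAt_exp (-(l*x))).comp x h1
      have h3 := HasDerivAt.const_sub 1 h2
      have : HasDerivAt (fun x : ℝ => 1 - Real.exp (-(l*x))) (l * Real.exp (-(l*x))) x := by
        refine h3.congr_deriv ?_; ring
      exact this.hasDerivWithinAt
    have hinj : InjOn (fun x : ℝ => 1 - Real.exp (-(l*x))) (Ioi 0) := by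
      intro a _ b _ h
      simp only at h
      have h1 : Real.exp (-(l*a)) = Real.exp (-(l*b)) := by linarith
      have h2 := Real.exp_injective h1
      have h3 : l * a = l * b := by
        have := neg_injective h2
        exact this
      exact mul_left_cancel₀ hl.ne' h3
    have key := integral_image_eq_integral_abs_deriv_smul measurableSet_Ioi hderiv hinj
      (fun u => (-Real.log (1-u)/l - μ)^2 * (v * u^(v-1)))
    rw [himg] at key
    rw [key]
    refine setIntegral_congr_fun measurableSet_Ioi (fun x hx => ?_)
    have hx' : (0:ℝ) < x := hx
    have hlx : 0 < l * x := mul_pos hl hx'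
    have hexp : (0:ℝ) < Real.exp (-(l*x)) := Real.exp_pos _
    have h1 : (0:ℝ) < 1 - Real.exp (-(l*x)) := by
      have : Real.exp (-(l*x)) < 1 := by rw [Real.exp_lt_one_iff]; linarith
      linarith
    rw [smul_eq_mul, abs_of_pos (by positivity)]
    show (x - μ)^2 * geDensity l v x = l * Real.exp (-(l*x)) *
      ((-Real.log (1 - (1 - Real.exp (-(l*x))))/l - μ)^2 * (v * (1 - Real.exp (-(l*x)))^(v-1)))
    rw [show (1:ℝ) - (1 - Real.exp (-(l*x))) = Real.exp (-(l*x)) by ring, Real.log_exp]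
    rw [geDensity]
    rw [show -(-(l*x))/l - μ = x - μ by field_simp]
    ring
  -- put everything together
  have hml : m = l * μ := by
    rw [hμ, hm]
    field_simp
  rw [hsub]
  have hsplit : ∀ u ∈ Ioo (0:ℝ) 1, (-Real.log (1-u)/l - μ)^2 * (v * u^(v-1))
      = (v/l^2) * (u^(v-1) * Real.log (1-u)^2) + ((2*v*μ/l) * (u^(v-1) * Real.log (1-u))
        + (v*μ^2) * (u^(v-1))) := by
    intro u hu
    field_simp
    ring
  calc (∫ u in Ioo (0:ℝ) 1, (-Real.log (1-u)/l - μ)^2 * (v * u^(v-1)))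
      = ∫ u in Ioo (0:ℝ) 1, ((v/l^2) * (u^(v-1) * Real.log (1-u)^2)
          + ((2*v*μ/l) * (u^(v-1) * Real.log (1-u)) + (v*μ^2) * (u^(v-1)))) :=
        setIntegral_congr_fun measurableSet_Ioo hsplit
    _ = (v/l^2) * ((m^2+Δ)/v) + ((2*v*μ/l) * (-(m/v)) + (v*μ^2) * (1/v)) := by
        have hA : IntegrableOn (fun u : ℝ => (v/l^2) * (u^(v-1) * Real.log (1-u)^2))
            (Ioo 0 1) := hint2.const_mul _
        have hB : IntegrableOn (fun u : ℝ => (2*v*μ/l) * (u^(v-1) * Real.log (1-u)))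
            (Ioo 0 1) := hint1.const_mul _
        have hC : IntegrableOn (fun u : ℝ => (v*μ^2) * (u^(v-1))) (Ioo 0 1) :=
          hint0.const_mul _
        have hBC : IntegrableOn (fun u : ℝ => (2*v*μ/l) * (u^(v-1) * Real.log (1-u))
            + (v*μ^2) * (u^(v-1))) (Ioo 0 1) := hB.add hC
        rw [integral_add hA hBC, integral_add hB hC,
          integral_const_mul, integral_const_mul, integral_const_mul, hJ0, hJ1, hJ2]
    _ = Δ / l^2 := by
        rw [hml]
        field_simp
        ring
end

section
/- Let λ > 0 and ν > 1, and let f(x; λ, ν) be the GE density. Then f(·; λ, ν) tends to 0 as x → 0⁺, is strictly increasing on the interval (0, log(ν)/λ], and is strictly decreasing on the interval [log(ν)/λ, ∞); in particular the density attains its unique mode at x = log(ν)/λ. -/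
open Real Set Filter

noncomputable def geG (v t : ℝ) : ℝ := t * (1 - t) ^ (v - 1)

lemma geG_hasDerivAt (v : ℝ) {t : ℝ} (ht : t < 1) :
    HasDerivAt (geG v) ((1 - t) ^ (v - 2) * (1 - v * t)) t := by
  have h1 : (1 : ℝ) - t ≠ 0 := by linarith
  have h1' : (0 : ℝ) < 1 - t := by linarith
  have hr : HasDerivAt (fun s : ℝ => (1 - s) ^ (v - 1))
      (((v - 1) * (1 - t) ^ (v - 1 - 1)) * (0 - 1)) t :=
    (Real.hasDerivAt_rpow_const (x := 1 - t) (p := v - 1) (Or.inl h1)).comp t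
      ((hasDerivAt_const t (1 : ℝ)).sub (hasDerivAt_id t))
  have h := (hasDerivAt_id t).mul hr
  have he : (1 - t) ^ (v - 1) = (1 - t) ^ (v - 2) * (1 - t) := by
    rw [show v - 1 = (v - 2) + 1 by ring, Real.rpow_add_one h1]
  have h' : HasDerivAt (geG v) (1 * (1 - t) ^ (v - 1) + id t * ((v - 1) * (1 - t) ^ (v - 1 - 1) * (0 - 1))) t := h
  convert h' using 1
  rw [show v - 1 - 1 = v - 2 by ring, he, id_eq]
  ring

lemma geG_strictMonoOn {v : ℝ} (hv : 1 < v) :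
    StrictMonoOn (geG v) (Icc 0 v⁻¹) := by
  have hv0 : (0 : ℝ) < v := by linarith
  have hinv : v⁻¹ < 1 := by
    rw [inv_lt_one_iff₀]; right; exact hv
  apply strictMonoOn_of_deriv_pos (convex_Icc _ _)
  · intro t htmem
    have ht1 : t < 1 := lt_of_le_of_lt htmem.2 hinv
    exact (geG_hasDerivAt v ht1).continuousAt.continuousWithinAt
  · intro t htmem
    rw [interior_Icc] at htmem
    have ht1 : t < 1 := lt_trans htmem.2 hinv
    rw [(geG_hasDerivAt v ht1).deriv]
    have h1 : (0 : ℝ) < (1 - t) ^ (v - 2) := Real.rpow_pos_of_pos (by linarith) _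
    have h2 : (0 : ℝ) < 1 - v * t := by
      nlinarith [mul_lt_mul_of_pos_left htmem.2 hv0, mul_inv_cancel₀ (ne_of_gt hv0)]
    positivity

lemma geG_strictAntiOn {v : ℝ} (hv : 1 < v) :
    StrictAntiOn (geG v) (Ico v⁻¹ 1) := by
  have hv0 : (0 : ℝ) < v := by linarith
  apply strictAntiOn_of_deriv_neg (convex_Ico _ _)
  · intro t htmem
    exact (geG_hasDerivAt v htmem.2).continuousAt.continuousWithinAt
  · intro t htmem
    rw [interior_Ico] at htmem
    rw [(geG_hasDerivAt v htmem.2).deriv]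
    have h1 : (0 : ℝ) < (1 - t) ^ (v - 2) := Real.rpow_pos_of_pos (by linarith [htmem.2]) _
    have h2 : 1 - v * t < 0 := by
      have : v⁻¹ < t := htmem.1
      nlinarith [mul_lt_mul_of_pos_left this hv0, mul_inv_cancel₀ (ne_of_gt hv0)]
    nlinarith

/-- For `ν > 1`, the GE density tends to `0` as `x → 0⁺`, is strictly increasing on
`(0, log ν / λ]`, strictly decreasing on `[log ν / λ, ∞)`, and in particular attains its
unique mode at `x = log ν / λ`. -/
theorem ge_density_mode (l v : ℝ) (hl : 0 < l) (hv : 1 < v) :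
    Tendsto (geDensity l v) (nhdsWithin 0 (Ioi 0)) (nhds 0) ∧
    StrictMonoOn (geDensity l v) (Ioc 0 (Real.log v / l)) ∧
    StrictAntiOn (geDensity l v) (Ici (Real.log v / l)) ∧
    ∀ x ∈ Ioi (0 : ℝ), x ≠ Real.log v / l →
      geDensity l v x < geDensity l v (Real.log v / l) := by
  have hv0 : (0 : ℝ) < v := by linarith
  set M : ℝ := Real.log v / l with hMdef
  have hlogv : 0 < Real.log v := Real.log_pos hv
  have hM : 0 < M := div_pos hlogv hl
  have hlM : l * M = Real.log v := by
    rw [hMdef]; field_simp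
  have hfg : ∀ x, geDensity l v x = l * v * geG v (Real.exp (-(l * x))) := by
    intro x; rw [geDensity, geG]; ring
  have hlv : 0 < l * v := mul_pos hl hv0
  -- membership facts
  have hmem1 : ∀ x ∈ Ioc 0 M, Real.exp (-(l * x)) ∈ Ico v⁻¹ 1 := by
    intro x hx
    constructor
    · have : -(l * M) ≤ -(l * x) := by
        have := mul_le_mul_of_nonneg_left hx.2 hl.le
        linarith
      calc v⁻¹ = Real.exp (-(l * M)) := by
            rw [hlM, Real.exp_neg, Real.exp_log hv0]
        _ ≤ Real.exp (-(l * x)) := Real.exp_le_exp.mpr this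
    · rw [Real.exp_lt_one_iff]
      have := mul_pos hl hx.1
      linarith
  have hmem2 : ∀ x ∈ Ici M, Real.exp (-(l * x)) ∈ Icc 0 v⁻¹ := by
    intro x hx
    refine ⟨(Real.exp_pos _).le, ?_⟩
    have : -(l * x) ≤ -(l * M) := by
      have := mul_le_mul_of_nonneg_left hx hl.le
      linarith
    calc Real.exp (-(l * x)) ≤ Real.exp (-(l * M)) := Real.exp_le_exp.mpr this
      _ = v⁻¹ := by rw [hlM, Real.exp_neg, Real.exp_log hv0]
  have hmono : StrictMonoOn (geDensity l v) (Ioc 0 M) := by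
    intro x hx y hy hxy
    rw [hfg, hfg]
    apply mul_lt_mul_of_pos_left _ hlv
    apply geG_strictAntiOn hv (hmem1 y hy) (hmem1 x hx)
    exact Real.exp_lt_exp.mpr (by nlinarith)
  have hanti : StrictAntiOn (geDensity l v) (Ici M) := by
    intro x hx y hy hxy
    rw [hfg, hfg]
    apply mul_lt_mul_of_pos_left _ hlv
    apply geG_strictMonoOn hv (hmem2 y hy) (hmem2 x hx)
    exact Real.exp_lt_exp.mpr (by nlinarith)
  refine ⟨?_, hmono, hanti, ?_⟩
  · -- tendsto
    have hval : geDensity l v 0 = 0 := by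
      simp [geDensity, Real.zero_rpow (by linarith : v - 1 ≠ 0)]
    have hcont : ContinuousAt (geDensity l v) 0 := by
      apply ContinuousAt.mul
      · fun_prop
      · have h1 : ContinuousAt (fun y : ℝ => y ^ (v - 1)) (1 - Real.exp (-(l * 0))) := by
          have h0 : (1 : ℝ) - Real.exp (-(l * 0)) = 0 := by simp
          rw [h0]
          exact Real.continuousAt_rpow_const 0 (v - 1) (Or.inr (by linarith))
        have h2 : ContinuousAt (fun x : ℝ => 1 - Real.exp (-(l * x))) 0 := by fun_prop
        exact ContinuousAt.comp (f := fun x : ℝ => 1 - Real.exp (-(l * x))) h1 h2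
    have := hcont.tendsto
    rw [hval] at this
    exact this.mono_left nhdsWithin_le_nhds
  · intro x hx hne
    rcases lt_or_gt_of_ne hne with h | h
    · exact hmono ⟨hx, h.le⟩ ⟨hM, le_refl _⟩ h
    · exact hanti self_mem_Ici h.le h
end

section
/- Let α ≥ 0, λ > 0, and ν > α/(1 + α), and let f(x; λ, ν) be the GE density. Then ∫₀^∞ f(x; λ, ν)^(1+α) dx = λ^α ν^(1+α) B(1 + α, (1 + α)(ν − 1) + 1), where B(a, b) = Γ(a)Γ(b)/Γ(a + b) is the Beta function. -/
open Real Set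

/-- The real Beta function `B(a, b) = Γ(a)Γ(b)/Γ(a+b)`. -/
noncomputable def realBeta (a b : ℝ) : ℝ :=
  Real.Gamma a * Real.Gamma b / Real.Gamma (a + b)

lemma realBeta_integral (s t : ℝ) (hs : 0 < s) (ht : 0 < t) :
    ∫ x in Ioo (0 : ℝ) 1, x ^ (s - 1) * (1 - x) ^ (t - 1) = realBeta s t := by
  have key : Complex.Gamma s * Complex.Gamma t
      = Complex.Gamma (s + t) * Complex.betaIntegral s t :=
    Complex.Gamma_mul_Gamma_eq_betaIntegral (by simpa using hs) (by simpa using ht)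
  have hbeta : Complex.betaIntegral (s : ℂ) (t : ℂ)
      = ((∫ x in Ioo (0 : ℝ) 1, x ^ (s - 1) * (1 - x) ^ (t - 1) : ℝ) : ℂ) := by
    rw [Complex.betaIntegral, intervalIntegral.integral_of_le zero_le_one,
      MeasureTheory.integral_Ioc_eq_integral_Ioo]
    have hcongr : ∀ x ∈ Ioo (0 : ℝ) 1,
        (x : ℂ) ^ ((s : ℂ) - 1) * ((1 : ℂ) - x) ^ ((t : ℂ) - 1)
          = ((x ^ (s - 1) * (1 - x) ^ (t - 1) : ℝ) : ℂ) := by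
      intro x hx
      obtain ⟨hx0, hx1⟩ := hx
      rw [Complex.ofReal_mul, Complex.ofReal_cpow hx0.le, Complex.ofReal_cpow (by linarith)]
      push_cast
      ring_nf
    rw [MeasureTheory.setIntegral_congr_fun measurableSet_Ioo hcongr]
    exact integral_ofReal
  have hGst : Real.Gamma (s + t) ≠ 0 := (Real.Gamma_pos_of_pos (by linarith)).ne'
  rw [← Complex.ofReal_add, Complex.Gamma_ofReal, Complex.Gamma_ofReal, Complex.Gamma_ofReal,
    hbeta, ← Complex.ofReal_mul, ← Complex.ofReal_mul, Complex.ofReal_inj] at key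
  rw [realBeta, eq_div_iff hGst, key]
  ring

/-- For `α ≥ 0`, `λ > 0` and `ν > α/(1+α)`,
`∫₀^∞ f(x; λ, ν)^(1+α) dx = λ^α ν^(1+α) B(1+α, (1+α)(ν−1)+1)`. -/
theorem ge_density_power_integral (a l v : ℝ) (ha : 0 ≤ a) (hl : 0 < l)
    (hv : a / (1 + a) < v) :
    ∫ x in Ioi (0 : ℝ), geDensity l v x ^ (1 + a) =
      l ^ a * v ^ (1 + a) * realBeta (1 + a) ((1 + a) * (v - 1) + 1) := by
  have ha1 : (0 : ℝ) < 1 + a := by linarith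
  have hv0 : 0 < v := lt_of_le_of_lt (div_nonneg ha ha1.le) hv
  have hB : 0 < (1 + a) * (v - 1) + 1 := by
    have := (div_lt_iff₀ ha1).mp hv
    nlinarith
  set g : ℝ → ℝ := fun t => (l * v) ^ (1 + a) / l * (t ^ a * (1 - t) ^ ((1 + a) * (v - 1)))
    with hg
  have himg : (fun x => Real.exp (-(l * x))) '' Ioi (0 : ℝ) = Ioo 0 1 := by
    ext y
    constructor
    · rintro ⟨x, hx, rfl⟩
      exact ⟨Real.exp_pos _, Real.exp_lt_one_iff.mpr (by nlinarith [mem_Ioi.mp hx])⟩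
    · rintro ⟨hy0, hy1⟩
      have hly : Real.log y < 0 := Real.log_neg hy0 hy1
      refine ⟨-Real.log y / l, mem_Ioi.mpr (div_pos (by linarith) hl), ?_⟩
      show Real.exp (-(l * (-Real.log y / l))) = y
      have h2 : l * (-Real.log y / l) = -Real.log y := by field_simp
      rw [h2, neg_neg, Real.exp_log hy0]
  have hchg : ∫ t in Ioo (0 : ℝ) 1, g t
      = ∫ x in Ioi (0 : ℝ), |(-l) * Real.exp (-(l * x))| • g (Real.exp (-(l * x))) := by
    rw [← himg]
    refine MeasureTheory.integral_image_eq_integral_abs_deriv_smul measurableSet_Ioi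
      (fun x _ => ?_) (fun x _ y _ hxy => ?_) g
    · exact (((hasDerivAt_id x).const_mul l).neg.exp.congr_deriv (by simp; ring)).hasDerivWithinAt
    · have h1 := Real.exp_injective hxy
      have h2 : l * x = l * y := by have := neg_injective h1; linarith
      exact mul_left_cancel₀ hl.ne' h2
  have heq : ∀ x ∈ Ioi (0 : ℝ),
      geDensity l v x ^ (1 + a) = |(-l) * Real.exp (-(l * x))| • g (Real.exp (-(l * x))) := by
    intro x hx
    have hx0 : 0 < x := mem_Ioi.mp hx
    have he1 : Real.exp (-(l * x)) < 1 := Real.exp_lt_one_iff.mpr (by nlinarith)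
    have he0 : (0 : ℝ) < Real.exp (-(l * x)) := Real.exp_pos _
    have h1e : (0 : ℝ) ≤ 1 - Real.exp (-(l * x)) := by linarith
    rw [geDensity, smul_eq_mul, abs_mul, abs_neg, abs_of_pos hl, abs_of_pos he0,
      Real.mul_rpow (by positivity) (Real.rpow_nonneg h1e _),
      Real.mul_rpow (by positivity) he0.le,
      ← Real.rpow_mul h1e, mul_comm (v - 1) (1 + a), Real.rpow_add he0, Real.rpow_one]
    simp only [hg]
    field_simp
  rw [MeasureTheory.setIntegral_congr_fun measurableSet_Ioi heq, ← hchg]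
  have hbeta : ∫ t in Ioo (0 : ℝ) 1, g t
      = (l * v) ^ (1 + a) / l * realBeta (1 + a) ((1 + a) * (v - 1) + 1) := by
    have h := realBeta_integral (1 + a) ((1 + a) * (v - 1) + 1) ha1 hB
    simp only [add_sub_cancel_left, add_sub_cancel_right] at h
    simp only [hg]
    rw [MeasureTheory.integral_const_mul, h]
  rw [hbeta, Real.mul_rpow hl.le hv0.le, Real.rpow_add hl, Real.rpow_one]
  field_simp
end

section
/- Let α ≥ 0, λ > 0, and ν > max(1, α/(1 + α)), let f(x; λ, ν) be the GE density, and let u_λ(x) = 1/λ − x + (ν − 1) x exp(−λx)/(1 − exp(−λx)) be the score function with respect to λ. Then ∫₀^∞ u_λ(x) f(x; λ, ν)^(1+α) dx = λ^(α−1) ν^(α+1) B(1 + α, (1 + α)(ν − 1) + 1) (1 + ψ(1 + α) − ψ(2 + α)). -/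
open Real Set

/-- The GE score function with respect to the rate parameter `λ`. -/
noncomputable def geScoreRate (l v x : ℝ) : ℝ :=
  1 / l - x + (v - 1) * x * Real.exp (-(l * x)) / (1 - Real.exp (-(l * x)))

open MeasureTheory Metric

section Aux

lemma betaIntegrand_integrableOn {a b : ℝ} (ha : 0 < a) (hb : 0 < b) :
    IntegrableOn (fun t : ℝ => t ^ (a - 1) * (1 - t) ^ (b - 1)) (Ioo 0 1) := by
  have h := (Complex.betaIntegral_convergent (u := (a : ℂ)) (v := (b : ℂ))
    (by simpa using ha) (by simpa using hb)).1
  rw [IntegrableOn, ← restrict_Ioo_eq_restrict_Ioc] at h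
  have h2 := h.re
  refine h2.congr (ae_restrict_of_forall_mem measurableSet_Ioo fun t ht => ?_)
  have h1t : (0:ℝ) ≤ 1 - t := by linarith [ht.2]
  have : ((t:ℂ) ^ ((a:ℂ) - 1) * (1 - (t:ℂ)) ^ ((b:ℂ) - 1)) =
      ((t ^ (a - 1) * (1 - t) ^ (b - 1) : ℝ) : ℂ) := by
    rw [show ((a:ℂ) - 1) = ((a - 1 : ℝ) : ℂ) by push_cast; ring,
      show ((b:ℂ) - 1) = ((b - 1 : ℝ) : ℂ) by push_cast; ring,
      ← Complex.ofReal_cpow ht.1.le, ← Complex.ofReal_one, ← Complex.ofReal_sub,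
      ← Complex.ofReal_cpow h1t, ← Complex.ofReal_mul]
  simp [this]

lemma ofReal_cpow_integrand {t : ℝ} (ht : t ∈ Ioo (0:ℝ) 1) (a b : ℝ) :
    (t:ℂ) ^ ((a:ℂ) - 1) * (1 - (t:ℂ)) ^ ((b:ℂ) - 1)
      = ((t ^ (a - 1) * (1 - t) ^ (b - 1) : ℝ) : ℂ) := by
  have h1t : (0:ℝ) ≤ 1 - t := by linarith [ht.2]
  rw [show ((a:ℂ) - 1) = ((a - 1 : ℝ) : ℂ) by push_cast; ring,
    show ((b:ℂ) - 1) = ((b - 1 : ℝ) : ℂ) by push_cast; ring,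
    ← Complex.ofReal_cpow ht.1.le, ← Complex.ofReal_one, ← Complex.ofReal_sub,
    ← Complex.ofReal_cpow h1t, ← Complex.ofReal_mul]

lemma betaIntegral_Ioo {a b : ℝ} (ha : 0 < a) (hb : 0 < b) :
    ∫ t in Ioo (0:ℝ) 1, t ^ (a - 1) * (1 - t) ^ (b - 1) = realBeta a b := by
  have key := Complex.Gamma_mul_Gamma_eq_betaIntegral (s := (a:ℂ)) (t := (b:ℂ))
    (by simpa using ha) (by simpa using hb)
  have hcongr : Complex.betaIntegral (a:ℂ) (b:ℂ) =
      ((∫ t in Ioo (0:ℝ) 1, t ^ (a - 1) * (1 - t) ^ (b - 1) : ℝ) : ℂ) := by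
    rw [Complex.betaIntegral, intervalIntegral.integral_of_le zero_le_one,
      integral_Ioc_eq_integral_Ioo,
      setIntegral_congr_fun measurableSet_Ioo (fun t ht => ofReal_cpow_integrand ht a b)]
    exact integral_ofReal
  rw [hcongr, ← Complex.ofReal_add, Complex.Gamma_ofReal, Complex.Gamma_ofReal,
    Complex.Gamma_ofReal, ← Complex.ofReal_mul, ← Complex.ofReal_mul] at key
  have h2 := Complex.ofReal_injective key
  have hG : Real.Gamma (a + b) ≠ 0 := (Real.Gamma_pos_of_pos (by linarith)).ne'
  unfold realBeta
  field_simp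
  linarith [h2]

lemma contOn_beta (p q : ℝ) :
    ContinuousOn (fun t : ℝ => t ^ p * (1 - t) ^ q) (Ioo (0:ℝ) 1) := by
  intro t ht
  have h1 : ContinuousAt (fun t : ℝ => t ^ p) t :=
    Real.continuousAt_rpow_const t p (Or.inl ht.1.ne')
  have h2 : ContinuousAt (fun t : ℝ => (1 - t) ^ q) t := by
    have h3 := (Real.continuousAt_rpow_const (1 - t) q
      (Or.inl (by have := ht.2; intro h; linarith [h])))
    exact ContinuousAt.comp h3 (continuous_const.sub continuous_id).continuousAt
  exact (h1.mul h2).continuousWithinAt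

lemma contOn_log : ContinuousOn Real.log (Ioo (0:ℝ) 1) :=
  fun t ht => (Real.continuousAt_log ht.1.ne').continuousWithinAt

lemma abs_log_le {t a : ℝ} (ht : t ∈ Ioo (0:ℝ) 1) (ha : 0 < a) :
    |Real.log t| ≤ (2 / a) * t ^ (-(a/2)) := by
  have h1 : |Real.log t| = Real.log t⁻¹ := by
    rw [Real.log_inv, abs_of_nonpos (Real.log_nonpos ht.1.le ht.2.le)]
  rw [h1]
  calc Real.log t⁻¹ ≤ (t⁻¹) ^ (a/2) / (a/2) :=
        Real.log_le_rpow_div (inv_nonneg.2 ht.1.le) (by positivity)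
    _ = (2 / a) * t ^ (-(a/2)) := by
        rw [Real.inv_rpow ht.1.le, Real.rpow_neg ht.1.le]
        field_simp

lemma betaIntegrand_log_integrableOn {a b : ℝ} (ha : 0 < a) (hb : 0 < b) :
    IntegrableOn (fun t : ℝ => t ^ (a - 1) * (1 - t) ^ (b - 1) * |Real.log t|) (Ioo 0 1) := by
  have hmeas : AEStronglyMeasurable
      (fun t : ℝ => t ^ (a - 1) * (1 - t) ^ (b - 1) * |Real.log t|)
      (volume.restrict (Ioo 0 1)) :=
    ((contOn_beta (a-1) (b-1)).mul contOn_log.abs).aestronglyMeasurable measurableSet_Ioo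
  refine Integrable.mono
    (((betaIntegrand_integrableOn (half_pos ha) hb).const_mul (2 / a))) hmeas ?_
  refine ae_restrict_of_forall_mem measurableSet_Ioo fun t ht => ?_
  have ht0 := ht.1
  have h1t : (0:ℝ) < 1 - t := by linarith [ht.2]
  have hlog := abs_log_le ht ha
  have hfnn : 0 ≤ t ^ (a - 1) * (1 - t) ^ (b - 1) * |Real.log t| :=
    mul_nonneg (mul_nonneg (Real.rpow_nonneg ht0.le _) (Real.rpow_nonneg h1t.le _)) (abs_nonneg _)
  have hgnn : 0 ≤ 2 / a * (t ^ (a / 2 - 1) * (1 - t) ^ (b - 1)) :=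
    mul_nonneg (by positivity) (mul_nonneg (Real.rpow_nonneg ht0.le _) (Real.rpow_nonneg h1t.le _))
  rw [Real.norm_eq_abs, Real.norm_eq_abs, abs_of_nonneg hfnn, abs_of_nonneg hgnn]
  calc t ^ (a - 1) * (1 - t) ^ (b - 1) * |Real.log t|
      ≤ t ^ (a - 1) * (1 - t) ^ (b - 1) * ((2 / a) * t ^ (-(a/2))) :=
        mul_le_mul_of_nonneg_left hlog
          (mul_nonneg (Real.rpow_nonneg ht0.le _) (Real.rpow_nonneg h1t.le _))
    _ = 2 / a * (t ^ (a / 2 - 1) * (1 - t) ^ (b - 1)) := by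
        rw [show a / 2 - 1 = (a - 1) + (-(a/2)) by ring, Real.rpow_add ht0]
        ring

lemma betaIntegrand_log_integrableOn' {a b : ℝ} (ha : 0 < a) (hb : 0 < b) :
    IntegrableOn (fun t : ℝ => t ^ (a - 1) * (1 - t) ^ (b - 1) * Real.log t) (Ioo 0 1) := by
  refine Integrable.mono (betaIntegrand_log_integrableOn ha hb)
    (((contOn_beta (a-1) (b-1)).mul contOn_log).aestronglyMeasurable measurableSet_Ioo) ?_
  refine ae_restrict_of_forall_mem measurableSet_Ioo fun t ht => ?_
  simp only [Real.norm_eq_abs, abs_mul, abs_abs]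
  exact le_refl _

lemma Gamma_hasDerivAt {x : ℝ} (hx : 0 < x) :
    HasDerivAt Real.Gamma (Real.Gamma x * digamma x) x := by
  have hne : ∀ n : ℕ, x ≠ -n := fun n h => by
    have : (0:ℝ) ≤ n := n.cast_nonneg
    nlinarith [hx]
  have hd := (Real.differentiableAt_Gamma hne).hasDerivAt
  have hpos := Real.Gamma_pos_of_pos hx
  have hlog : HasDerivAt (fun y => Real.log (Real.Gamma y))
      (deriv Real.Gamma x / Real.Gamma x) x := hd.log hpos.ne'
  have : digamma x = deriv Real.Gamma x / Real.Gamma x := hlog.deriv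
  rw [this, mul_div_cancel₀ _ hpos.ne']
  exact hd

lemma realBeta_hasDerivAt {a b : ℝ} (ha : 0 < a) (hb : 0 < b) :
    HasDerivAt (fun s => realBeta s b)
      (realBeta a b * (digamma a - digamma (a + b))) a := by
  have h1 := Gamma_hasDerivAt ha
  have h2 : HasDerivAt (fun s : ℝ => Real.Gamma (s + b))
      (Real.Gamma (a + b) * digamma (a + b)) a := by
    simpa [Function.comp_def] using (Gamma_hasDerivAt (by linarith : (0:ℝ) < a + b)).comp a
      ((hasDerivAt_id a).add_const b)
  have hpos := Real.Gamma_pos_of_pos ha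
  have hposb := Real.Gamma_pos_of_pos hb
  have hposab := Real.Gamma_pos_of_pos (by linarith : (0:ℝ) < a + b)
  have h3 := (h1.mul_const (Real.Gamma b)).div h2 hposab.ne'
  refine HasDerivAt.congr_deriv h3 ?_
  unfold realBeta
  field_simp

lemma betaIntegral_log {a b : ℝ} (ha : 0 < a) (hb : 0 < b) :
    ∫ t in Ioo (0:ℝ) 1, t ^ (a - 1) * (1 - t) ^ (b - 1) * Real.log t
      = realBeta a b * (digamma a - digamma (a + b)) := by
  set μ := volume.restrict (Ioo (0:ℝ) 1) with hμ
  have key := hasDerivAt_integral_of_dominated_loc_of_deriv_le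
    (F := fun s t => t ^ (s - 1) * (1 - t) ^ (b - 1))
    (F' := fun s t => t ^ (s - 1) * (1 - t) ^ (b - 1) * Real.log t)
    (x₀ := a) (μ := μ)
    (bound := fun t => t ^ (a/2 - 1) * (1 - t) ^ (b - 1) * |Real.log t|)
    (ball_mem_nhds a (half_pos ha))
    (Filter.Eventually.of_forall fun s =>
      ((contOn_beta (s-1) (b-1)).aestronglyMeasurable measurableSet_Ioo))
    (betaIntegrand_integrableOn ha hb)
    (((contOn_beta (a-1) (b-1)).mul contOn_log).aestronglyMeasurable measurableSet_Ioo)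
    ?hbound
    (betaIntegrand_log_integrableOn (half_pos ha) hb)
    ?hdiff
  case hbound =>
    refine ae_restrict_of_forall_mem measurableSet_Ioo fun t ht s hs => ?_
    have ht0 := ht.1
    have h1t : (0:ℝ) < 1 - t := by linarith [ht.2]
    have hs1 : a / 2 - 1 ≤ s - 1 := by
      rw [mem_ball, Real.dist_eq, abs_lt] at hs
      linarith [hs.1]
    rw [Real.norm_eq_abs, abs_mul, abs_mul,
      abs_of_nonneg (Real.rpow_nonneg ht0.le _), abs_of_nonneg (Real.rpow_nonneg h1t.le _)]
    have := Real.rpow_le_rpow_of_exponent_ge ht0 ht.2.le hs1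
    exact mul_le_mul_of_nonneg_right
      (mul_le_mul_of_nonneg_right this (Real.rpow_nonneg h1t.le _)) (abs_nonneg _)
  case hdiff =>
    refine ae_restrict_of_forall_mem measurableSet_Ioo fun t ht s _ => ?_
    have h := ((Real.hasStrictDerivAt_const_rpow ht.1 (s-1)).hasDerivAt.comp s
      ((hasDerivAt_id s).sub_const 1)).mul_const ((1 - t) ^ (b - 1))
    refine h.congr_deriv ?_
    ring
  have hderiv := key.2
  have heq : (fun s => ∫ t, t ^ (s - 1) * (1 - t) ^ (b - 1) ∂μ) =ᶠ[nhds a]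
      (fun s => realBeta s b) := by
    filter_upwards [eventually_gt_nhds ha] with s hs
    exact betaIntegral_Ioo hs hb
  have hderiv2 := hderiv.congr_of_eventuallyEq heq.symm
  simpa using (hderiv2.unique (realBeta_hasDerivAt ha hb))

end Aux

/-- For `α ≥ 0`, `λ > 0` and `ν > max(1, α/(1+α))`,
`∫₀^∞ u_λ(x) f(x; λ, ν)^(1+α) dx
  = λ^(α−1) ν^(α+1) B(1+α, (1+α)(ν−1)+1) (1 + ψ(1+α) − ψ(2+α))`. -/
theorem ge_weighted_score_rate_integral (a l v : ℝ) (ha : 0 ≤ a) (hl : 0 < l)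
    (hv : max 1 (a / (1 + a)) < v) :
    ∫ x in Ioi (0 : ℝ), geScoreRate l v x * geDensity l v x ^ (1 + a) =
      l ^ (a - 1) * v ^ (a + 1) * realBeta (1 + a) ((1 + a) * (v - 1) + 1) *
        (1 + digamma (1 + a) - digamma (2 + a)) := by
  have hv1 : 1 < v := lt_of_le_of_lt (le_max_left _ _) hv
  set b : ℝ := (1 + a) * (v - 1) + 1 with hb_def
  have hb1 : 1 < b := by
    have h : 0 < (1 + a) * (v - 1) := by nlinarith
    simp only [hb_def]; linarith
  have hb0 : 0 < b := by linarith
  set C : ℝ := l ^ (a - 1) * v ^ (a + 1) with hC_def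
  set g : ℝ → ℝ := fun t => C * (t ^ a * (1 - t) ^ (b - 1) + t ^ a * (1 - t) ^ (b - 1) * Real.log t
      - (v - 1) * (t ^ (a + 1) * (1 - t) ^ (b - 2) * Real.log t)) with hg_def
  -- change of variables t = exp(-(l x))
  have himg : (fun x : ℝ => Real.exp (-(l * x))) '' Ioi 0 = Ioo 0 1 := by
    ext y
    constructor
    · rintro ⟨x, hx, rfl⟩
      have hx0 : (0:ℝ) < x := hx
      refine ⟨Real.exp_pos _, ?_⟩
      rw [Real.exp_lt_one_iff]
      nlinarith
    · rintro ⟨hy0, hy1⟩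
      have hlog : Real.log y < 0 := Real.log_neg hy0 hy1
      refine ⟨-Real.log y / l, div_pos (neg_pos.2 hlog) hl, ?_⟩
      show Real.exp (-(l * (-Real.log y / l))) = y
      rw [show -(l * (-Real.log y / l)) = Real.log y by field_simp]
      exact Real.exp_log hy0
  have hinj : InjOn (fun x : ℝ => Real.exp (-(l * x))) (Ioi 0) := by
    intro x _ y _ hxy
    have h1 := Real.exp_injective hxy
    have h2 := neg_injective h1
    exact mul_left_cancel₀ hl.ne' h2
  have hderiv : ∀ x ∈ Ioi (0:ℝ), HasDerivWithinAt (fun x : ℝ => Real.exp (-(l * x)))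
      (-l * Real.exp (-(l * x))) (Ioi 0) x := by
    intro x _
    have h1 : HasDerivAt (fun x : ℝ => -(l * x)) (-l) x := by
      simpa [Pi.neg_def] using ((hasDerivAt_id x).const_mul l).neg
    have h2 := (Real.hasDerivAt_exp (-(l * x))).comp x h1
    simpa [mul_comm, Function.comp_def] using h2.hasDerivWithinAt
  have hcv : ∫ t in Ioo (0:ℝ) 1, g t =
      ∫ x in Ioi (0:ℝ), |(-l * Real.exp (-(l * x)))| • g (Real.exp (-(l * x))) := by
    rw [← himg]
    exact integral_image_eq_integral_abs_deriv_smul measurableSet_Ioi hderiv hinj g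
  have hpt : ∀ x ∈ Ioi (0:ℝ), |(-l * Real.exp (-(l * x)))| • g (Real.exp (-(l * x)))
      = geScoreRate l v x * geDensity l v x ^ (1 + a) := by
    intro x hx
    have hx0 : (0:ℝ) < x := hx
    set E : ℝ := Real.exp (-(l * x)) with hE_def
    have hE0 : 0 < E := Real.exp_pos _
    have hE1 : E < 1 := by rw [hE_def, Real.exp_lt_one_iff]; nlinarith
    have h1E : 0 < 1 - E := by linarith
    have hlogE : Real.log E = -(l * x) := Real.log_exp _
    have habs : |(-l * E)| = l * E := by
      rw [abs_mul, abs_neg, abs_of_pos hl, abs_of_pos hE0]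
    have hL : l ^ ((1:ℝ) + a) = l * l * l ^ (a - 1) := by
      rw [show (1:ℝ) + a = 1 + 1 + (a - 1) by ring, Real.rpow_add hl, Real.rpow_add hl,
        Real.rpow_one]
    have hEe : E ^ ((1:ℝ) + a) = E * E ^ a := by
      rw [Real.rpow_add hE0, Real.rpow_one]
    have hV : v ^ ((1:ℝ) + a) = v ^ (a + 1) := by rw [add_comm]
    have hd : geDensity l v x ^ (1 + a)
        = (l * l * l ^ (a - 1)) * v ^ (a + 1) * (E * E ^ a) * ((1 - E) * (1 - E) ^ (b - 2)) := by
      unfold geDensity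
      rw [← hE_def,
        Real.mul_rpow (by positivity) (Real.rpow_nonneg h1E.le _),
        Real.mul_rpow (by positivity) hE0.le,
        Real.mul_rpow hl.le (by linarith : (0:ℝ) ≤ v),
        ← Real.rpow_mul h1E.le,
        show (v - 1) * (1 + a) = 1 + (b - 2) by rw [hb_def]; ring,
        Real.rpow_add h1E, Real.rpow_one, hL, hEe, hV]
    have hBE : (1 - E) ^ (b - 1) = (1 - E) * (1 - E) ^ (b - 2) := by
      rw [show b - 1 = 1 + (b - 2) by ring, Real.rpow_add h1E, Real.rpow_one]
    have hEa : E ^ (a + 1) = E ^ a * E := by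
      rw [Real.rpow_add hE0, Real.rpow_one]
    rw [smul_eq_mul, habs, hd]
    simp only [hg_def, hC_def, hlogE, hBE, hEa]
    unfold geScoreRate
    rw [← hE_def]
    field_simp
    ring
  -- integrability of the pieces
  have I0 : IntegrableOn (fun t : ℝ => t ^ a * (1 - t) ^ (b - 1)) (Ioo (0:ℝ) 1) := by
    have h := betaIntegrand_integrableOn (show (0:ℝ) < a + 1 by linarith) hb0
    simpa only [add_sub_cancel_right] using h
  have I1 : IntegrableOn (fun t : ℝ => t ^ a * (1 - t) ^ (b - 1) * Real.log t) (Ioo (0:ℝ) 1) := by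
    have h := betaIntegrand_log_integrableOn' (show (0:ℝ) < a + 1 by linarith) hb0
    simpa only [add_sub_cancel_right] using h
  have I2 : IntegrableOn (fun t : ℝ => t ^ (a + 1) * (1 - t) ^ (b - 2) * Real.log t)
      (Ioo (0:ℝ) 1) := by
    have h := betaIntegrand_log_integrableOn' (show (0:ℝ) < a + 2 by linarith)
      (show (0:ℝ) < b - 1 by linarith)
    simpa only [show a + 2 - 1 = a + 1 by ring, show b - 1 - 1 = b - 2 by ring] using h
  -- values
  have V0 : ∫ t in Ioo (0:ℝ) 1, t ^ a * (1 - t) ^ (b - 1) = realBeta (a + 1) b := by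
    have h := betaIntegral_Ioo (show (0:ℝ) < a + 1 by linarith) hb0
    simpa only [add_sub_cancel_right] using h
  have V1 : ∫ t in Ioo (0:ℝ) 1, t ^ a * (1 - t) ^ (b - 1) * Real.log t
      = realBeta (a + 1) b * (digamma (a + 1) - digamma (a + 1 + b)) := by
    have h := betaIntegral_log (show (0:ℝ) < a + 1 by linarith) hb0
    simpa only [add_sub_cancel_right] using h
  have V2 : ∫ t in Ioo (0:ℝ) 1, t ^ (a + 1) * (1 - t) ^ (b - 2) * Real.log t
      = realBeta (a + 2) (b - 1) * (digamma (a + 2) - digamma (a + 1 + b)) := by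
    have h := betaIntegral_log (show (0:ℝ) < a + 2 by linarith)
      (show (0:ℝ) < b - 1 by linarith)
    simpa only [show a + 2 - 1 = a + 1 by ring, show b - 1 - 1 = b - 2 by ring,
      show a + 2 + (b - 1) = a + 1 + b by ring] using h
  -- Gamma recurrence
  have hga1 : (0:ℝ) < a + 1 := by linarith
  have hvB : (v - 1) * realBeta (a + 2) (b - 1) = realBeta (a + 1) b := by
    have hA1 : Real.Gamma (a + 2) = (a + 1) * Real.Gamma (a + 1) := by
      rw [show a + 2 = (a + 1) + 1 by ring, Real.Gamma_add_one hga1.ne']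
    have hBb : Real.Gamma b = (b - 1) * Real.Gamma (b - 1) := by
      have h := Real.Gamma_add_one (ne_of_gt (by linarith : (0:ℝ) < b - 1))
      rwa [sub_add_cancel] at h
    have h3 : (v - 1) * (a + 1) = b - 1 := by rw [hb_def]; ring
    unfold realBeta
    rw [show a + 2 + (b - 1) = a + 1 + b by ring, hA1, hBb]
    have hGne : Real.Gamma (a + 1 + b) ≠ 0 := (Real.Gamma_pos_of_pos (by linarith)).ne'
    field_simp
    linear_combination Real.Gamma (a + 1) * Real.Gamma (b - 1) * h3
  -- assemble
  have hmain : ∫ x in Ioi (0:ℝ), geScoreRate l v x * geDensity l v x ^ (1 + a)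
      = ∫ t in Ioo (0:ℝ) 1, g t := by
    rw [hcv]
    exact (setIntegral_congr_fun measurableSet_Ioi hpt).symm
  rw [hmain]
  have hsplit : ∫ t in Ioo (0:ℝ) 1, g t =
      C * ((∫ t in Ioo (0:ℝ) 1, t ^ a * (1 - t) ^ (b - 1))
        + (∫ t in Ioo (0:ℝ) 1, t ^ a * (1 - t) ^ (b - 1) * Real.log t)
        - (v - 1) * ∫ t in Ioo (0:ℝ) 1, t ^ (a + 1) * (1 - t) ^ (b - 2) * Real.log t) := by
    simp only [hg_def]
    rw [integral_const_mul]
    congr 1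
    have IA : IntegrableOn (fun t : ℝ => t ^ a * (1 - t) ^ (b - 1)
        + t ^ a * (1 - t) ^ (b - 1) * Real.log t) (Ioo (0:ℝ) 1) := I0.add I1
    have IB : IntegrableOn (fun t : ℝ => (v - 1) * (t ^ (a + 1) * (1 - t) ^ (b - 2) * Real.log t))
        (Ioo (0:ℝ) 1) := I2.const_mul _
    rw [integral_sub IA IB, integral_add I0 I1, integral_const_mul]
  rw [hsplit, V0, V1, V2]
  rw [hC_def, show (1:ℝ) + a = a + 1 by ring, show (2:ℝ) + a = a + 2 by ring]
  linear_combination (l ^ (a - 1) * v ^ (a + 1)) * (digamma (a + 1 + b) - digamma (a + 2)) * hvB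
end

section
/- Let α ≥ 0 and ν > 1. For λ > 0, let ξ_α(λ, ν) be the 2-vector with components ξ_α(λ, ν)_i = ∫₀^∞ u_i(x) f(x; λ, ν)^(1+α) dx, where u_1 = u_λ and u_2 = u_ν are the GE score functions. Then for every λ > 0: ξ_α(λ, ν)_1 = λ^(α−1) ξ_α(1, ν)_1 and ξ_α(λ, ν)_2 = λ^α ξ_α(1, ν)_2. -/
open Real Set

/-- The GE score vector `u(x) = (u_λ(x), u_ν(x))ᵀ`. -/
noncomputable def geScore (l v x : ℝ) : Fin 2 → ℝ :=
  ![1 / l - x + (v - 1) * x * Real.exp (-(l * x)) / (1 - Real.exp (-(l * x))),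
    1 / v + Real.log (1 - Real.exp (-(l * x)))]

/-- `J_β(λ, ν) = ∫₀^∞ u(x) u(x)ᵀ f(x; λ, ν)^(1+β) dx`. -/
noncomputable def geJ (b l v : ℝ) : Matrix (Fin 2) (Fin 2) ℝ :=
  Matrix.of fun i j =>
    ∫ x in Ioi (0 : ℝ), geScore l v x i * geScore l v x j * geDensity l v x ^ (1 + b)

/-- `ξ_α(λ, ν) = ∫₀^∞ u(x) f(x; λ, ν)^(1+α) dx`. -/
noncomputable def geXi (a l v : ℝ) : Fin 2 → ℝ := fun i =>
  ∫ x in Ioi (0 : ℝ), geScore l v x i * geDensity l v x ^ (1 + a)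

/-- `K_α(λ, ν) = J_{2α}(λ, ν) − ξ_α(λ, ν) ξ_α(λ, ν)ᵀ`. -/
noncomputable def geK (a l v : ℝ) : Matrix (Fin 2) (Fin 2) ℝ :=
  geJ (2 * a) l v - Matrix.of fun i j => geXi a l v i * geXi a l v j

/-- The asymptotic covariance matrix `Σ_α(λ, ν) = J_α⁻¹ K_α J_α⁻¹` of the rescaled MDPDE. -/
noncomputable def geSigma (a l v : ℝ) : Matrix (Fin 2) (Fin 2) ℝ :=
  (geJ a l v)⁻¹ * geK a l v * (geJ a l v)⁻¹

open MeasureTheory in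
/-- Scaling of the components of `ξ_α(λ, ν)` in the rate parameter `λ`. -/
theorem geXi_scaling (a v : ℝ) (ha : 0 ≤ a) (hv : 1 < v) :
    ∀ l : ℝ, 0 < l →
      geXi a l v 0 = l ^ (a - 1) * geXi a 1 v 0 ∧
      geXi a l v 1 = l ^ a * geXi a 1 v 1 := by
  intro l hl
  have hl' : l ≠ 0 := hl.ne'
  have hDpos : ∀ x ∈ Ioi (0:ℝ), 0 < geDensity 1 v (l * x) := by
    intro x hx
    have hlx : 0 < l * x := mul_pos hl hx
    have h1 : 0 < 1 - Real.exp (-(1 * (l * x))) := by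
      rw [sub_pos, one_mul]
      exact Real.exp_lt_one_iff.mpr (by linarith)
    unfold geDensity
    have := Real.rpow_pos_of_pos h1 (v - 1)
    positivity
  have hDeq : ∀ x : ℝ, geDensity l v x = l * geDensity 1 v (l * x) := by
    intro x
    simp only [geDensity, one_mul]
    ring
  have hpow : ∀ x ∈ Ioi (0:ℝ),
      geDensity l v x ^ (1 + a) = l ^ (1 + a) * geDensity 1 v (l * x) ^ (1 + a) := by
    intro x hx
    rw [hDeq x, Real.mul_rpow hl.le (hDpos x hx).le]
  constructor
  · have key : EqOn (fun x => geScore l v x 0 * geDensity l v x ^ (1 + a))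
        (fun x => l ^ a * ((fun y => geScore 1 v y 0 * geDensity 1 v y ^ (1 + a)) (l * x)))
        (Ioi 0) := by
      intro x hx
      simp only [geScore, Matrix.cons_val_zero, hpow x hx, one_mul]
      have hs : (1 / l - x + (v - 1) * x * Real.exp (-(l * x)) / (1 - Real.exp (-(l * x))))
          = l⁻¹ * (1 / 1 - l * x + (v - 1) * (l * x) * Real.exp (-(l * x)) / (1 - Real.exp (-(l * x)))) := by
        rcases eq_or_ne (1 - Real.exp (-(l * x))) 0 with h | h
        · rw [h]; field_simp
        · field_simp
      rw [hs]
      have hr : l ^ (1 + a) = l * l ^ a := by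
        rw [Real.rpow_add hl, Real.rpow_one]
      rw [hr]
      field_simp
    rw [geXi, setIntegral_congr_fun measurableSet_Ioi key, integral_const_mul,
      integral_comp_mul_left_Ioi (fun y => geScore 1 v y 0 * geDensity 1 v y ^ (1 + a)) 0 hl, mul_zero]
    rw [smul_eq_mul, ← mul_assoc, ← Real.rpow_neg_one l, ← Real.rpow_add hl]
    rw [geXi, ← sub_eq_add_neg]
  · have key : EqOn (fun x => geScore l v x 1 * geDensity l v x ^ (1 + a))
        (fun x => l ^ (1 + a) * ((fun y => geScore 1 v y 1 * geDensity 1 v y ^ (1 + a)) (l * x)))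
        (Ioi 0) := by
      intro x hx
      simp only [geScore, Matrix.cons_val_one, Matrix.head_cons, hpow x hx, one_mul]
      ring
    rw [geXi, setIntegral_congr_fun measurableSet_Ioi key, integral_const_mul,
      integral_comp_mul_left_Ioi (fun y => geScore 1 v y 1 * geDensity 1 v y ^ (1 + a)) 0 hl, mul_zero]
    rw [smul_eq_mul, ← mul_assoc, Real.rpow_add hl, Real.rpow_one]
    rw [geXi]
    field_simp
end

section
/- Let α ≥ 0 and ν > 1. For λ > 0, define K_α(λ, ν) = J_{2α}(λ, ν) − ξ_α(λ, ν) ξ_α(λ, ν)ᵀ, where J_β(λ, ν) = ∫₀^∞ u(x) u(x)ᵀ f(x; λ, ν)^(1+β) dx and ξ_α(λ, ν) = ∫₀^∞ u(x) f(x; λ, ν)^(1+α) dx with u(x) = (u_λ(x), u_ν(x))ᵀ the GE score vector. Then for every λ > 0: K_α(λ, ν)_{11} = λ^(2α−2) K_α(1, ν)_{11}, K_α(λ, ν)_{12} = K_α(λ, ν)_{21} = λ^(2α−1) K_α(1, ν)_{12}, and K_α(λ, ν)_{22} = λ^(2α) K_α(1, ν)_{22}. -/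
open Real Set

/- ### Auxiliary lemmas -/

lemma geDensity_scale {l : ℝ} (hl : 0 < l) (v x : ℝ) :
    geDensity l v x = l * geDensity 1 v (l * x) := by
  simp [geDensity]; ring

lemma geDensity_one_nonneg {v x : ℝ} (hv : 0 < v) (hx : 0 < x) :
    0 ≤ geDensity 1 v x := by
  have h1 : 0 ≤ 1 - Real.exp (-(1 * x)) := by
    have : Real.exp (-(1 * x)) ≤ 1 := Real.exp_le_one_iff.mpr (by linarith)
    linarith
  unfold geDensity
  have := Real.rpow_nonneg h1 (v - 1)
  positivity

lemma geScore0_scale {l : ℝ} (hl : 0 < l) (v : ℝ) {x : ℝ} (hx : 0 < x) :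
    geScore l v x 0 = l⁻¹ * geScore 1 v (l * x) 0 := by
  have hD : (1 : ℝ) - Real.exp (-(l * x)) ≠ 0 := by
    have : Real.exp (-(l * x)) < 1 := Real.exp_lt_one_iff.mpr (by nlinarith)
    linarith
  simp only [geScore, Matrix.cons_val_zero, one_mul]
  field_simp

lemma geScore1_scale {l : ℝ} (v x : ℝ) :
    geScore l v x 1 = geScore 1 v (l * x) 1 := by
  simp [geScore]

/-- Change of variables `x ↦ l⁻¹ x` on `Ioi 0`. -/
lemma int_scale {l : ℝ} (hl : 0 < l) {F G : ℝ → ℝ} (c : ℝ)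
    (h : ∀ x ∈ Ioi (0 : ℝ), F x = c * G (l * x)) :
    ∫ x in Ioi (0 : ℝ), F x = c * l⁻¹ * ∫ x in Ioi (0 : ℝ), G x := by
  rw [MeasureTheory.setIntegral_congr_fun measurableSet_Ioi h,
    MeasureTheory.integral_const_mul,
    MeasureTheory.integral_comp_mul_left_Ioi G 0 hl, mul_zero, smul_eq_mul]
  ring

lemma rpow_collect {l : ℝ} (hl : 0 < l) {e1 e2 e : ℝ} (he : e1 + e2 = e) :
    l ^ e1 * l ^ e2 = l ^ e := by
  rw [← Real.rpow_add hl, he]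

lemma geJ_scale {l : ℝ} (hl : 0 < l) (b v : ℝ) (hv : 0 < v) :
    geJ b l v 0 0 = l ^ (b - 2) * geJ b 1 v 0 0 ∧
    geJ b l v 0 1 = l ^ (b - 1) * geJ b 1 v 0 1 ∧
    geJ b l v 1 0 = l ^ (b - 1) * geJ b 1 v 1 0 ∧
    geJ b l v 1 1 = l ^ b * geJ b 1 v 1 1 := by
  have hinv : l⁻¹ = l ^ (-1 : ℝ) := (Real.rpow_neg_one l).symm
  have hd : ∀ x ∈ Ioi (0 : ℝ), geDensity l v x ^ (1 + b)
      = l ^ (1 + b) * geDensity 1 v (l * x) ^ (1 + b) := by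
    intro x hx
    rw [geDensity_scale hl, Real.mul_rpow hl.le (geDensity_one_nonneg hv (mul_pos hl (mem_Ioi.mp hx)))]
  simp only [geJ, Matrix.of_apply]
  refine ⟨?_, ?_, ?_, ?_⟩
  · rw [int_scale hl (l ^ (b - 1)) (G := fun y =>
      geScore 1 v y 0 * geScore 1 v y 0 * geDensity 1 v y ^ (1 + b)) ?_,
      hinv, rpow_collect hl (e := b - 2) (by ring)]
    intro x hx
    rw [geScore0_scale hl v hx, hd x hx]
    have : l⁻¹ * l⁻¹ * l ^ (1 + b) = l ^ (b - 1) := by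
      rw [hinv, rpow_collect hl (e := (-2 : ℝ)) (by norm_num), rpow_collect hl (e := b - 1) (by ring)]
    calc l⁻¹ * geScore 1 v (l * x) 0 * (l⁻¹ * geScore 1 v (l * x) 0) *
          (l ^ (1 + b) * geDensity 1 v (l * x) ^ (1 + b))
        = (l⁻¹ * l⁻¹ * l ^ (1 + b)) * (geScore 1 v (l * x) 0 * geScore 1 v (l * x) 0 *
          geDensity 1 v (l * x) ^ (1 + b)) := by ring
      _ = _ := by rw [this]
  · rw [int_scale hl (l ^ b) (G := fun y =>
      geScore 1 v y 0 * geScore 1 v y 1 * geDensity 1 v y ^ (1 + b)) ?_,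
      hinv, rpow_collect hl (e := b - 1) (by ring)]
    intro x hx
    rw [geScore0_scale hl v hx, geScore1_scale v x, hd x hx]
    have : l⁻¹ * l ^ (1 + b) = l ^ b := by
      rw [hinv, rpow_collect hl (e := b) (by ring)]
    calc l⁻¹ * geScore 1 v (l * x) 0 * geScore 1 v (l * x) 1 *
          (l ^ (1 + b) * geDensity 1 v (l * x) ^ (1 + b))
        = (l⁻¹ * l ^ (1 + b)) * (geScore 1 v (l * x) 0 * geScore 1 v (l * x) 1 *
          geDensity 1 v (l * x) ^ (1 + b)) := by ring
      _ = _ := by rw [this]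
  · rw [int_scale hl (l ^ b) (G := fun y =>
      geScore 1 v y 1 * geScore 1 v y 0 * geDensity 1 v y ^ (1 + b)) ?_,
      hinv, rpow_collect hl (e := b - 1) (by ring)]
    intro x hx
    rw [geScore0_scale hl v hx, geScore1_scale v x, hd x hx]
    have : l⁻¹ * l ^ (1 + b) = l ^ b := by
      rw [hinv, rpow_collect hl (e := b) (by ring)]
    calc geScore 1 v (l * x) 1 * (l⁻¹ * geScore 1 v (l * x) 0) *
          (l ^ (1 + b) * geDensity 1 v (l * x) ^ (1 + b))
        = (l⁻¹ * l ^ (1 + b)) * (geScore 1 v (l * x) 1 * geScore 1 v (l * x) 0 *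
          geDensity 1 v (l * x) ^ (1 + b)) := by ring
      _ = _ := by rw [this]
  · rw [int_scale hl (l ^ (b + 1)) (G := fun y =>
      geScore 1 v y 1 * geScore 1 v y 1 * geDensity 1 v y ^ (1 + b)) ?_,
      hinv, rpow_collect hl (e := b) (by ring)]
    intro x hx
    rw [geScore1_scale v x, hd x hx]
    rw [show l ^ (1 + b) = l ^ (b + 1) by ring_nf]
    ring

lemma geXi_scale {l : ℝ} (hl : 0 < l) (a v : ℝ) (hv : 0 < v) :
    geXi a l v 0 = l ^ (a - 1) * geXi a 1 v 0 ∧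
    geXi a l v 1 = l ^ a * geXi a 1 v 1 := by
  have hinv : l⁻¹ = l ^ (-1 : ℝ) := (Real.rpow_neg_one l).symm
  have hd : ∀ x ∈ Ioi (0 : ℝ), geDensity l v x ^ (1 + a)
      = l ^ (1 + a) * geDensity 1 v (l * x) ^ (1 + a) := by
    intro x hx
    rw [geDensity_scale hl, Real.mul_rpow hl.le (geDensity_one_nonneg hv (mul_pos hl (mem_Ioi.mp hx)))]
  simp only [geXi]
  constructor
  · rw [int_scale hl (l ^ a) (G := fun y => geScore 1 v y 0 * geDensity 1 v y ^ (1 + a)) ?_,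
      hinv, rpow_collect hl (e := a - 1) (by ring)]
    intro x hx
    rw [geScore0_scale hl v hx, hd x hx]
    have : l⁻¹ * l ^ (1 + a) = l ^ a := by
      rw [hinv, rpow_collect hl (e := a) (by ring)]
    calc l⁻¹ * geScore 1 v (l * x) 0 * (l ^ (1 + a) * geDensity 1 v (l * x) ^ (1 + a))
        = (l⁻¹ * l ^ (1 + a)) * (geScore 1 v (l * x) 0 * geDensity 1 v (l * x) ^ (1 + a)) := by
          ring
      _ = _ := by rw [this]
  · rw [int_scale hl (l ^ (a + 1)) (G := fun y =>
      geScore 1 v y 1 * geDensity 1 v y ^ (1 + a)) ?_,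
      hinv, rpow_collect hl (e := a) (by ring)]
    intro x hx
    rw [geScore1_scale v x, hd x hx]
    rw [show l ^ (1 + a) = l ^ (a + 1) by ring_nf]
    ring

lemma geJ_symm (b l v : ℝ) : geJ b l v 1 0 = geJ b l v 0 1 := by
  simp only [geJ, Matrix.of_apply]
  apply MeasureTheory.integral_congr_ae
  filter_upwards with x
  ring

/-- Scaling of the entries of `K_α(λ, ν) = J_{2α}(λ, ν) − ξ_α ξ_αᵀ` in the rate `λ`. -/
theorem geK_scaling (a v : ℝ) (ha : 0 ≤ a) (hv : 1 < v) :
    ∀ l : ℝ, 0 < l →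
      geK a l v 0 0 = l ^ (2 * a - 2) * geK a 1 v 0 0 ∧
      geK a l v 0 1 = l ^ (2 * a - 1) * geK a 1 v 0 1 ∧
      geK a l v 1 0 = l ^ (2 * a - 1) * geK a 1 v 0 1 ∧
      geK a l v 1 1 = l ^ (2 * a) * geK a 1 v 1 1 := by
  intro l hl
  have hv0 : 0 < v := lt_trans one_pos hv
  obtain ⟨hJ00, hJ01, hJ10, hJ11⟩ := geJ_scale hl (2 * a) v hv0
  obtain ⟨hX0, hX1⟩ := geXi_scale hl a v hv0
  simp only [geK, Matrix.sub_apply, Matrix.of_apply]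
  have h1 : l ^ (a - 1) * l ^ (a - 1) = l ^ (2 * a - 2) := rpow_collect hl (by ring)
  have h2 : l ^ (a - 1) * l ^ a = l ^ (2 * a - 1) := rpow_collect hl (by ring)
  have h3 : l ^ a * l ^ (a - 1) = l ^ (2 * a - 1) := rpow_collect hl (by ring)
  have h4 : l ^ a * l ^ a = l ^ (2 * a) := rpow_collect hl (by ring)
  refine ⟨?_, ?_, ?_, ?_⟩
  · rw [hJ00, hX0]; linear_combination (-(geXi a 1 v 0 * geXi a 1 v 0)) * h1
  · rw [hJ01, hX0, hX1]; linear_combination (-(geXi a 1 v 0 * geXi a 1 v 1)) * h2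
  · rw [hJ10, hX0, hX1, geJ_symm (2 * a) 1 v]; linear_combination (-(geXi a 1 v 0 * geXi a 1 v 1)) * h3
  · rw [hJ11, hX1]; linear_combination (-(geXi a 1 v 1 * geXi a 1 v 1)) * h4
end
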